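/- arXiv:1012.2192 — 3 statements merged into one kernel-verified Lean document; each statement's English description precedes it below -/
import Mathlib

section
/- Let P be a closed set of positions, n = u_{n,P}(q) the corresponding pattern algebra, and let λ ∈ n* be quasi-monomial. If ⊥S_λ = ∅, then ⊥L_λ = ∅; equivalently, if s¹_λ = n then l¹_λ = n, i.e., λ(XY) = 0 for all X, Y ∈ n. -/
open scoped BigOperators Classical ComplexOrder
open Complex

set_option linter.unusedSectionVars false

noncomputable section

namespace Paper

variable {F : Type*} [Field F]

/-! ### Characters of finite groups -/

/-- `f : G → ℂ` is the character of some finite-dimensional complex representation. -/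
def IsCharacter {G : Type} [Monoid G] (f : G → ℂ) : Prop :=
  ∃ V : FDRep ℂ G, V.character = f

/-- `f : G → ℂ` is the character of some irreducible finite-dimensional complex
representation. -/
def IsIrreducibleCharacter {G : Type} [Monoid G] (f : G → ℂ) : Prop :=
  ∃ V : FDRep ℂ G, CategoryTheory.Simple V ∧ V.character = f

/-- The standard inner product `⟨f, h⟩ = |G|⁻¹ ∑ₓ f x conj (h x)` on complex-valued
functions on a finite group. -/
def cinner (G : Type*) (f h : G → ℂ) : ℂ :=
  (Nat.card G : ℂ)⁻¹ * ∑ᶠ x : G, f x * (starRingEnd ℂ) (h x)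

/-- Induction of a complex-valued function from (the subset underlying) a subgroup `H` of a
finite group `G`, via the Frobenius formula
`Ind_H^G(f)(g) = |H|⁻¹ ∑_{x ∈ G, xgx⁻¹ ∈ H} f (xgx⁻¹)`. -/
def indFun {G : Type*} [Group G] (H : Set G) (f : G → ℂ) : G → ℂ := fun g =>
  (Nat.card H : ℂ)⁻¹ * ∑ᶠ x : G, if x * g * x⁻¹ ∈ H then f (x * g * x⁻¹) else 0

/-- The set of elements of the `m`-th cyclotomic field `ℚ(ζ_m) ⊆ ℂ`, where
`ζ_m = exp (2πi/m)`. -/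
def cycField (m : ℕ) : Set ℂ :=
  (Algebra.adjoin ℚ {Complex.exp (2 * Real.pi * Complex.I / m)} : Subalgebra ℚ ℂ)

/-! ### Algebra groups of matrix algebras -/

variable {n : ℕ}

/-- The subgroup `1 + S` of invertible matrices, for `S` a non-unital subalgebra of the
matrix algebra (for example the algebra of strictly upper triangular matrices). -/
def grp [Fintype F] (S : NonUnitalSubalgebra F (Matrix (Fin n) (Fin n) F)) :
    Subgroup (Matrix (Fin n) (Fin n) F)ˣ where
  carrier := {g | (g : Matrix (Fin n) (Fin n) F) - 1 ∈ S}
  one_mem' := by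
    show ((1 : (Matrix (Fin n) (Fin n) F)ˣ) : Matrix (Fin n) (Fin n) F) - 1 ∈ S
    rw [Units.val_one, sub_self]; exact zero_mem S
  mul_mem' := by
    intro a b ha hb
    show ((a * b : (Matrix (Fin n) (Fin n) F)ˣ) : Matrix (Fin n) (Fin n) F) - 1 ∈ S
    have h : ((a * b : (Matrix (Fin n) (Fin n) F)ˣ) : Matrix (Fin n) (Fin n) F) - 1 =
        ((a : Matrix (Fin n) (Fin n) F) - 1) + ((b : Matrix (Fin n) (Fin n) F) - 1) +
          ((a : Matrix (Fin n) (Fin n) F) - 1) * ((b : Matrix (Fin n) (Fin n) F) - 1) := by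
      rw [Units.val_mul]; noncomm_ring
    rw [h]
    exact add_mem (add_mem ha hb) (mul_mem ha hb)
  inv_mem' := by
    intro a ha
    show ((a⁻¹ : (Matrix (Fin n) (Fin n) F)ˣ) : Matrix (Fin n) (Fin n) F) - 1 ∈ S
    have hpow : ∀ m : ℕ, ((a ^ m : (Matrix (Fin n) (Fin n) F)ˣ) : Matrix (Fin n) (Fin n) F)
        - 1 ∈ S := by
      intro m
      induction m with
      | zero => rw [pow_zero, Units.val_one, sub_self]; exact zero_mem S
      | succ m ih =>
          rw [pow_succ, Units.val_mul]
          have h : ((a ^ m : (Matrix (Fin n) (Fin n) F)ˣ) : Matrix (Fin n) (Fin n) F) *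
              (a : Matrix (Fin n) (Fin n) F) - 1 =
              (((a ^ m : (Matrix (Fin n) (Fin n) F)ˣ) : Matrix (Fin n) (Fin n) F) - 1) +
              ((a : Matrix (Fin n) (Fin n) F) - 1) +
              (((a ^ m : (Matrix (Fin n) (Fin n) F)ˣ) : Matrix (Fin n) (Fin n) F) - 1) *
              ((a : Matrix (Fin n) (Fin n) F) - 1) := by noncomm_ring
          rw [h]
          exact add_mem (add_mem ih ha) (mul_mem ih ha)
    have hk : 0 < orderOf a := orderOf_pos a
    have hinv : a⁻¹ = a ^ (orderOf a - 1) := by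
      have h1 : a ^ (orderOf a - 1) * a = 1 := by
        rw [← pow_succ, Nat.sub_add_cancel hk, pow_orderOf_eq_one]
      exact (eq_inv_of_mul_eq_one_left h1).symm
    rw [hinv]
    exact hpow _

variable [Fintype F] {S : NonUnitalSubalgebra F (Matrix (Fin n) (Fin n) F)}

lemma mem_grp_iff {g : (Matrix (Fin n) (Fin n) F)ˣ} :
    g ∈ grp S ↔ (g : Matrix (Fin n) (Fin n) F) - 1 ∈ S := Iff.rfl

/-- The underlying matrix of an element of an algebra group. -/
def mat (g : ↥(grp S)) : Matrix (Fin n) (Fin n) F :=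
  ((g : (Matrix (Fin n) (Fin n) F)ˣ) : Matrix (Fin n) (Fin n) F)

lemma mat_mem (g : ↥(grp S)) : mat g - 1 ∈ S := g.2

/-- `g - 1` as an element of the algebra `S`. -/
def gsub (g : ↥(grp S)) : ↥S := ⟨mat g - 1, mat_mem g⟩

/-- The dual space of `F`-linear functionals on the algebra `S`. -/
abbrev Dual (S : NonUnitalSubalgebra F (Matrix (Fin n) (Fin n) F)) := ↥S →ₗ[F] F

/-- The function `θ_λ(g) = θ(λ(g-1))` on the algebra group `1 + S`. -/
def thetaFun (θ : AddChar F ℂ) (lam : Dual S) : ↥(grp S) → ℂ := fun g => θ (lam (gsub g))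

lemma conj_mem (a b : ↥(grp S)) {X : Matrix (Fin n) (Fin n) F} (hX : X ∈ S) :
    mat a * X * mat b ∈ S := by
  have h : mat a * X * mat b =
      X + (mat a - 1) * X + X * (mat b - 1) + (mat a - 1) * X * (mat b - 1) := by noncomm_ring
  rw [h]
  exact add_mem (add_mem (add_mem hX (mul_mem (mat_mem a) hX)) (mul_mem hX (mat_mem b)))
    (mul_mem (mul_mem (mat_mem a) hX) (mat_mem b))

/-- The functional `X ↦ λ(a · X · b)`, used to define the various actions of an algebra group
on the dual space of its algebra. -/
def conjDual (a b : ↥(grp S)) (lam : Dual S) : Dual S where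
  toFun X := lam ⟨mat a * (X : Matrix (Fin n) (Fin n) F) * mat b, conj_mem a b X.2⟩
  map_add' X Y := by
    try dsimp only
    rw [← map_add]
    exact congrArg lam (Subtype.ext (by simp [mul_add, add_mul]))
  map_smul' c X := by
    try dsimp only
    rw [RingHom.id_apply, ← map_smul]
    exact congrArg lam (Subtype.ext (by simp [Matrix.mul_smul, Matrix.smul_mul]))

/-- The left orbit `Gλ` of `λ` under `(gλ)(X) = λ(g⁻¹X)`. -/
def leftOrbit (lam : Dual S) : Set (Dual S) := {ν | ∃ g : ↥(grp S), ν = conjDual g⁻¹ 1 lam}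

/-- The two-sided orbit `GλG` of `λ` under `(gλh)(X) = λ(g⁻¹Xh⁻¹)`. -/
def biOrbit (lam : Dual S) : Set (Dual S) := {ν | ∃ g h : ↥(grp S), ν = conjDual g⁻¹ h⁻¹ lam}

/-- The coadjoint orbit of `λ` under `λ^g(X) = λ(gXg⁻¹)`. -/
def coadjOrbit (lam : Dual S) : Set (Dual S) := {ν | ∃ g : ↥(grp S), ν = conjDual g g⁻¹ lam}

/-- The supercharacter `χ_λ = (|Gλ|/|GλG|) ∑_{ν ∈ GλG} θ_ν`. -/
def superChar (θ : AddChar F ℂ) (lam : Dual S) : ↥(grp S) → ℂ := fun g =>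
  ((Nat.card (leftOrbit lam) : ℂ) / (Nat.card (biOrbit lam) : ℂ)) *
    ∑ᶠ ν ∈ biOrbit lam, thetaFun θ ν g

/-- The Kirillov function `ψ_λ = |λ^G|^{-1/2} ∑_{ν ∈ λ^G} θ_ν`. -/
def kirillov (θ : AddChar F ℂ) (lam : Dual S) : ↥(grp S) → ℂ := fun g =>
  ((Real.sqrt (Nat.card (coadjOrbit lam)) : ℂ))⁻¹ * ∑ᶠ ν ∈ coadjOrbit lam, thetaFun θ ν g


/-! ### The strictly upper triangular algebra -/

/-- The `F`-algebra of strictly upper triangular `n × n` matrices. -/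
def uAlg (n : ℕ) (F : Type*) [Field F] :
    NonUnitalSubalgebra F (Matrix (Fin n) (Fin n) F) :=
  Submodule.toNonUnitalSubalgebra
    { carrier := {M | ∀ i j : Fin n, j ≤ i → M i j = 0}
      add_mem' := fun ha hb i j hij => by
        rw [Matrix.add_apply, ha i j hij, hb i j hij, add_zero]
      zero_mem' := fun i j _ => rfl
      smul_mem' := fun c a ha i j hij => by
        rw [Matrix.smul_apply, ha i j hij, smul_zero] }
    (by
      intro X Y hX hY i j hij
      rw [Matrix.mul_apply]
      refine Finset.sum_eq_zero fun k _ => ?_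
      by_cases hk : k ≤ i
      · rw [hX i k hk, zero_mul]
      · rw [hY k j (hij.trans (not_le.mp hk).le), mul_zero])

lemma mem_uAlg {M : Matrix (Fin n) (Fin n) F} :
    M ∈ uAlg n F ↔ ∀ i j : Fin n, j ≤ i → M i j = 0 := Iff.rfl

/-! ### The chain of subspaces `l^i ⊆ ⋯ ⊆ s^i` attached to a linear functional -/

section Chain

variable {A : Type*} [NonUnitalRing A] [Module F A] [SMulCommClass F A A] [IsScalarTower F A A]

/-- For subspaces `s, t` of an algebra, the subspace `{x ∈ s | λ(x·t) = 0}`. -/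
def lker (lam : A →ₗ[F] F) (s t : Submodule F A) : Submodule F A where
  carrier := {x | x ∈ s ∧ ∀ y ∈ t, lam (x * y) = 0}
  add_mem' := fun ha hb => ⟨s.add_mem ha.1 hb.1, fun y hy => by
    rw [add_mul, map_add, ha.2 y hy, hb.2 y hy, add_zero]⟩
  zero_mem' := ⟨s.zero_mem, fun y _ => by rw [zero_mul, map_zero]⟩
  smul_mem' := fun c a ha => ⟨s.smul_mem c ha.1, fun y hy => by
    rw [smul_mul_assoc, map_smul, ha.2 y hy, smul_zero]⟩

/-- The pair of subspaces `(l^i, s^i)` defined inductively by `l⁰ = 0`, `s⁰ = n`,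
`l^{i+1} = {X ∈ s^i : λ(X·s^i) = 0}`, `s^{i+1} = {X ∈ s^i : λ(X·l^{i+1}) = 0}`. -/
def chain (lam : A →ₗ[F] F) : ℕ → Submodule F A × Submodule F A
  | 0 => (⊥, ⊤)
  | i + 1 =>
    (lker lam (chain lam i).2 (chain lam i).2,
     lker lam (chain lam i).2 (lker lam (chain lam i).2 (chain lam i).2))

/-- The subspace `l^i_λ`. -/
def lC (lam : A →ₗ[F] F) (i : ℕ) : Submodule F A := (chain lam i).1

/-- The subspace `s^i_λ`. -/
def sC (lam : A →ₗ[F] F) (i : ℕ) : Submodule F A := (chain lam i).2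

/-- The terminal subspace `l̄_λ` of the ascending chain `l¹ ⊆ l² ⊆ ⋯`. -/
def lbar (lam : A →ₗ[F] F) : Submodule F A := ⨆ i, lC lam i

/-- The terminal subspace `s̄_λ` of the descending chain `s¹ ⊇ s² ⊇ ⋯`. -/
def sbar (lam : A →ₗ[F] F) : Submodule F A := ⨅ i, sC lam i

end Chain

/-- The underlying set of the algebra subgroup `L̄_λ = 1 + l̄_λ`. -/
def Lset (lam : Dual S) : Set ↥(grp S) := {g | gsub g ∈ lbar lam}

/-- The underlying set of the algebra subgroup `S̄_λ = 1 + s̄_λ`. -/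
def Sset (lam : Dual S) : Set ↥(grp S) := {g | gsub g ∈ sbar lam}

/-- The character `ξ_λ = Ind_{L̄_λ}^G (θ_λ)`. -/
def xiChar (θ : AddChar F ℂ) (lam : Dual S) : ↥(grp S) → ℂ :=
  indFun (Lset lam) (thetaFun θ lam)

/-! ### Quasi-monomial functionals and shapes -/

/-- The value `λ_{ij} = λ(e_{ij})` (interpreted as `0` when `e_{ij} ∉ S`). -/
def lamEntry (lam : Dual S) (i j : Fin n) : F :=
  if h : Matrix.single i j (1 : F) ∈ S then lam ⟨_, h⟩ else 0

/-- A functional is quasi-monomial if the matrix `(λ_{ij})` has at most one nonzero entry in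
each row and in each column. -/
def QuasiMonomial (lam : Dual S) : Prop :=
  (∀ i j k : Fin n, lamEntry lam i j ≠ 0 → lamEntry lam i k ≠ 0 → j = k) ∧
  (∀ i j k : Fin n, lamEntry lam i k ≠ 0 → lamEntry lam j k ≠ 0 → i = j)

/-- The parts of the shape of `λ`: the equivalence classes of the finest equivalence
relation for which `i ∼ j` whenever `λ_{ij} ≠ 0`. -/
def shapeClasses (lam : Dual S) : Set (Set (Fin n)) :=
  {s | ∃ i : Fin n,
    s = {j | Relation.EqvGen (fun a b => lamEntry lam a b ≠ 0 ∨ lamEntry lam b a ≠ 0) i j}}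

/-! ### Explicit functionals -/

/-- The linear functional on `S` determined by a matrix `c` of coefficients:
`X ↦ ∑_{i,j} c_{ij} X_{ij}`; it sends the elementary matrix `e_{ij}` to `c_{ij}`. -/
def lamOf (S : NonUnitalSubalgebra F (Matrix (Fin n) (Fin n) F))
    (c : Matrix (Fin n) (Fin n) F) : Dual S where
  toFun X := ∑ i : Fin n, ∑ j : Fin n, c i j * (X : Matrix (Fin n) (Fin n) F) i j
  map_add' X Y := by
    simp [Matrix.add_apply, mul_add, Finset.sum_add_distrib]
  map_smul' a X := by
    simp only [RingHom.id_apply, smul_eq_mul, Finset.mul_sum]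
    refine Finset.sum_congr rfl fun i _ => Finset.sum_congr rfl fun j _ => ?_
    have : ((a • X : ↥S) : Matrix (Fin n) (Fin n) F) i j
        = a * (X : Matrix (Fin n) (Fin n) F) i j := by
      simp [Matrix.smul_apply]
    rw [this]; ring

/-- The coordinate functional `e*_{ij} : X ↦ X_{ij}` on `S`. -/
def coordFn (S : NonUnitalSubalgebra F (Matrix (Fin n) (Fin n) F))
    (a : Fin n × Fin n) : Dual S where
  toFun X := (X : Matrix (Fin n) (Fin n) F) a.1 a.2
  map_add' X Y := by simp
  map_smul' c X := by simp

/-- Matrix entry in (1-based) coordinates, `0` when out of range. -/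
def ent (X : Matrix (Fin n) (Fin n) F) (a : ℕ × ℕ) : F :=
  if h : 1 ≤ a.1 ∧ a.1 ≤ n ∧ 1 ≤ a.2 ∧ a.2 ≤ n then
    X ⟨a.1 - 1, by omega⟩ ⟨a.2 - 1, by omega⟩ else 0


/-! ### The specific functional `λ` on `u_{n}(q)` from Section 3.3 of the paper -/

/-- The coefficient matrix of the functional `λ` (positions written 1-based). -/
def lamCoef (r n : ℕ) (F : Type*) [Field F] : Matrix (Fin n) (Fin n) F := fun a b =>
  let j := (a : ℕ) + 1
  let k := (b : ℕ) + 1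
  if 1 ≤ j ∧ j ≤ r ∧ k = j + r then -1
  else if 1 ≤ j ∧ j ≤ r ∧ k = j + 2 * r then 1
  else if r + 1 ≤ j ∧ j ≤ 2 * r ∧ k = j + 2 * r + 1 then -1
  else if r + 1 ≤ j ∧ j ≤ 2 * r ∧ k = j + 3 * r + 1 then 1
  else if 2 * r + 1 ≤ j ∧ j ≤ 3 * r + 1 ∧ k = j + r then 1
  else if 3 * r + 2 ≤ j ∧ j ≤ 4 * r + 1 ∧ k = j + 2 * r then 1
  else 0

/-- The linear functional `λ ∈ u_n(q)*` of the paper, determined by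
`λ(e_{jk}) = -1` if `j = k - r ∈ [1,r]`, `λ(e_{jk}) = 1` if `j = k - 2r ∈ [1,r]`,
`λ(e_{jk}) = -1` if `j = k - 2r - 1 ∈ [r+1,2r]`, `λ(e_{jk}) = 1` if `j = k - 3r - 1 ∈ [r+1,2r]`,
`λ(e_{jk}) = 1` if `j = k - r ∈ [2r+1,3r+1]`, `λ(e_{jk}) = 1` if `j = k - 2r ∈ [3r+2,4r+1]`,
and `λ(e_{jk}) = 0` otherwise. -/
def lamStd (r n : ℕ) (F : Type*) [Field F] [Fintype F] : Dual (uAlg n F) :=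
  lamOf (uAlg n F) (lamCoef r n F)

/-! ### Pattern algebras -/

/-- A set of positions is closed when `(i,j) ∈ P` and `(j,k) ∈ P` imply `(i,k) ∈ P`. -/
def IsClosedPositions {n : ℕ} (P : Set (Fin n × Fin n)) : Prop :=
  ∀ i j k : Fin n, (i, j) ∈ P → (j, k) ∈ P → (i, k) ∈ P

/-- The subspace of matrices supported on a set `P` of positions. -/
def patSub (n : ℕ) (F : Type*) [Field F] (P : Set (Fin n × Fin n)) :
    Submodule F (Matrix (Fin n) (Fin n) F) where
  carrier := {M | ∀ i j : Fin n, (i, j) ∉ P → M i j = 0}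
  add_mem' := fun ha hb i j hij => by
    rw [Matrix.add_apply, ha i j hij, hb i j hij, add_zero]
  zero_mem' := fun i j _ => rfl
  smul_mem' := fun c a ha i j hij => by rw [Matrix.smul_apply, ha i j hij, smul_zero]

/-- The pattern algebra `u_{n,P}(q)` of matrices supported on a closed set `P` of
positions. -/
def patAlg (n : ℕ) (F : Type*) [Field F] (P : Set (Fin n × Fin n))
    (hC : IsClosedPositions P) : NonUnitalSubalgebra F (Matrix (Fin n) (Fin n) F) :=
  (patSub n F P).toNonUnitalSubalgebra (by
    intro X Y hX hY
    intro i j hij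
    rw [Matrix.mul_apply]
    refine Finset.sum_eq_zero fun k _ => ?_
    by_cases hik : (i, k) ∈ P
    · by_cases hkj : (k, j) ∈ P
      · exact absurd (hC i k j hik hkj) hij
      · rw [hY k j hkj, mul_zero]
    · rw [hX i k hik, zero_mul])


/-! ### The algebra `a_n(q)` of superdiagonal-constant strictly upper triangular matrices -/

/-- Membership condition for `a_n(q)` : strictly upper triangular, and constant along each
superdiagonal. -/
def aCond {n : ℕ} (M : Matrix (Fin n) (Fin n) F) : Prop :=
  (∀ i j : Fin n, j ≤ i → M i j = 0) ∧
  ∀ i j i' j' : Fin n, (i : ℕ) < j → (i' : ℕ) < j' →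
    (i : ℕ) + (j' : ℕ) = (i' : ℕ) + (j : ℕ) → M i j = M i' j'

lemma aCond_mul {n : ℕ} {X Y : Matrix (Fin n) (Fin n) F}
    (hX : aCond X) (hY : aCond Y) : aCond (X * Y) := by
  obtain ⟨hXu, hXc⟩ := hX
  obtain ⟨hYu, hYc⟩ := hY
  have hupper : ∀ i j : Fin n, j ≤ i → (X * Y) i j = 0 := by
    intro i j hij
    rw [Matrix.mul_apply]
    refine Finset.sum_eq_zero fun k _ => ?_
    by_cases hk : k ≤ i
    · rw [hXu i k hk, zero_mul]
    · rw [hYu k j (hij.trans (not_le.mp hk).le), mul_zero]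
  refine ⟨hupper, ?_⟩
  intro i j i' j' hij hij' hsum
  rw [Matrix.mul_apply, Matrix.mul_apply]
  have h1 : ∀ k : Fin n, ¬((i : ℕ) < (k : ℕ) ∧ (k : ℕ) < (j : ℕ)) → X i k * Y k j = 0 := by
    intro k hk
    by_cases h : (i : ℕ) < (k : ℕ)
    · have hjk : j ≤ k := by rw [Fin.le_def]; omega
      rw [hYu k j hjk, mul_zero]
    · have hki : k ≤ i := by rw [Fin.le_def]; omega
      rw [hXu i k hki, zero_mul]
  have h2 : ∀ k : Fin n, ¬((i' : ℕ) < (k : ℕ) ∧ (k : ℕ) < (j' : ℕ)) → X i' k * Y k j' = 0 := by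
    intro k hk
    by_cases h : (i' : ℕ) < (k : ℕ)
    · have hjk : j' ≤ k := by rw [Fin.le_def]; omega
      rw [hYu k j' hjk, mul_zero]
    · have hki : k ≤ i' := by rw [Fin.le_def]; omega
      rw [hXu i' k hki, zero_mul]
  have e1 : ∑ k : Fin n, X i k * Y k j
      = ∑ k ∈ Finset.univ.filter (fun k : Fin n => (i : ℕ) < (k : ℕ) ∧ (k : ℕ) < (j : ℕ)),
        X i k * Y k j := by
    refine (Finset.sum_filter_of_ne fun k _ hk => ?_).symm
    by_contra hp
    exact hk (h1 k hp)
  have e2 : ∑ k : Fin n, X i' k * Y k j'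
      = ∑ k ∈ Finset.univ.filter (fun k : Fin n => (i' : ℕ) < (k : ℕ) ∧ (k : ℕ) < (j' : ℕ)),
        X i' k * Y k j' := by
    refine (Finset.sum_filter_of_ne fun k _ hk => ?_).symm
    by_contra hp
    exact hk (h2 k hp)
  rw [e1, e2]
  refine Finset.sum_bij'
    (fun (k : Fin n) (hk : k ∈ Finset.univ.filter
        (fun k : Fin n => (i : ℕ) < (k : ℕ) ∧ (k : ℕ) < (j : ℕ))) =>
      (⟨(i' : ℕ) + ((k : ℕ) - (i : ℕ)), by
        have h1 := (Finset.mem_filter.mp hk).2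
        have h2 := j'.isLt
        omega⟩ : Fin n))
    (fun (m : Fin n) (hm : m ∈ Finset.univ.filter
        (fun m : Fin n => (i' : ℕ) < (m : ℕ) ∧ (m : ℕ) < (j' : ℕ))) =>
      (⟨(i : ℕ) + ((m : ℕ) - (i' : ℕ)), by
        have h1 := (Finset.mem_filter.mp hm).2
        have h2 := j.isLt
        omega⟩ : Fin n))
    ?_ ?_ ?_ ?_ ?_
  · intro k hk
    have h1 := (Finset.mem_filter.mp hk).2
    simp only [Finset.mem_filter, Finset.mem_univ, true_and]
    constructor
    · omega
    · omega
  · intro m hm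
    have h1 := (Finset.mem_filter.mp hm).2
    simp only [Finset.mem_filter, Finset.mem_univ, true_and]
    constructor
    · omega
    · omega
  · intro k hk
    have h1 := (Finset.mem_filter.mp hk).2
    exact Fin.ext (by simp only [Fin.val_mk]; omega)
  · intro m hm
    have h1 := (Finset.mem_filter.mp hm).2
    exact Fin.ext (by simp only [Fin.val_mk]; omega)
  · intro k hk
    have h1 := (Finset.mem_filter.mp hk).2
    have hx : X i k = X i' ⟨(i' : ℕ) + ((k : ℕ) - (i : ℕ)), by
        have h2 := j'.isLt; omega⟩ := by
      refine hXc i k i' _ h1.1 ?_ ?_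
      · simp only [Fin.val_mk]; omega
      · simp only [Fin.val_mk]; omega
    have hy : Y k j = Y ⟨(i' : ℕ) + ((k : ℕ) - (i : ℕ)), by
        have h2 := j'.isLt; omega⟩ j' := by
      refine hYc k j _ j' h1.2 ?_ ?_
      · simp only [Fin.val_mk]; omega
      · simp only [Fin.val_mk]; omega
    rw [hx, hy]

/-- The algebra `a_n(q)` of strictly upper triangular matrices that are constant along each
superdiagonal. -/
def aAlg (n : ℕ) (F : Type*) [Field F] [Fintype F] :
    NonUnitalSubalgebra F (Matrix (Fin n) (Fin n) F) :=
  Submodule.toNonUnitalSubalgebra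
    { carrier := {M | aCond M}
      add_mem' := by
        rintro a b ⟨hau, hac⟩ ⟨hbu, hbc⟩
        refine ⟨fun i j hij => by rw [Matrix.add_apply, hau i j hij, hbu i j hij, add_zero],
          fun i j i' j' h1 h2 h3 => ?_⟩
        rw [Matrix.add_apply, Matrix.add_apply, hac i j i' j' h1 h2 h3,
          hbc i j i' j' h1 h2 h3]
      zero_mem' := ⟨fun i j _ => rfl, fun _ _ _ _ _ _ _ => rfl⟩
      smul_mem' := by
        rintro c a ⟨hau, hac⟩
        refine ⟨fun i j hij => by rw [Matrix.smul_apply, hau i j hij, smul_zero],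
          fun i j i' j' h1 h2 h3 => ?_⟩
        rw [Matrix.smul_apply, Matrix.smul_apply, hac i j i' j' h1 h2 h3] }
    (fun X Y hX hY => aCond_mul hX hY)

lemma mem_aAlg {M : Matrix (Fin n) (Fin n) F} : M ∈ aAlg n F ↔ aCond M := Iff.rfl


/-- Iterated product `a * b₁ * ⋯ * b_k` of elements of a (non-unital) algebra. -/
def mulChain {A : Type*} [Mul A] : A → List A → A
  | a, [] => a
  | a, b :: l => mulChain (a * b) l

/-! ### Algebra groups of abstract nilpotent algebras, via the unitization -/

section AlgebraGroup

variable (F : Type) [Field F] (A : Type) [NonUnitalRing A] [Module F A]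
  [SMulCommClass F A A] [IsScalarTower F A A]

/-- The algebra `A` is nilpotent: some power `A^k` vanishes, i.e. all products of `k`
elements of `A` are zero. -/
def IsNilpotentAlgebra : Prop :=
  ∃ k : ℕ, ∀ (a : A) (l : List A), l.length + 1 = k → mulChain a l = 0

/-- The algebra group `G = 1 + A`, realized as the group of units of the unitization
`F ⊕ A` whose scalar component equals `1` (for `A` nilpotent these are exactly the
elements `1 + X`, `X ∈ A`). -/
def algGrp : Subgroup (Unitization F A)ˣ where
  carrier := {u | ((u : Unitization F A)).fst = 1}
  one_mem' := by simp
  mul_mem' := by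
    intro a b ha hb
    show ((a * b : (Unitization F A)ˣ) : Unitization F A).fst = 1
    rw [Units.val_mul, Unitization.fst_mul]
    rw [Set.mem_setOf_eq] at ha hb
    rw [ha, hb, one_mul]
  inv_mem' := by
    intro a ha
    rw [Set.mem_setOf_eq] at ha
    show ((a⁻¹ : (Unitization F A)ˣ) : Unitization F A).fst = 1
    have h : ((a : Unitization F A) * ((a⁻¹ : (Unitization F A)ˣ) : Unitization F A)).fst
        = (1 : Unitization F A).fst := by
      rw [Units.mul_inv]
    rw [Unitization.fst_mul, ha, one_mul, Unitization.fst_one] at h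
    exact h

variable {F A}

/-- The element `g - 1 ∈ A` for `g` in the algebra group `1 + A`. -/
def sndU (g : ↥(algGrp F A)) : A := ((g : (Unitization F A)ˣ) : Unitization F A).snd

/-- The function `θ_λ(g) = θ(λ(g - 1))` on the algebra group `1 + A`. -/
def thetaFunU (θ : AddChar F ℂ) (lam : A →ₗ[F] F) : ↥(algGrp F A) → ℂ := fun g =>
  θ (lam (sndU g))

/-- The coadjoint action: `λ^g(X) = λ(g X g⁻¹)`. -/
def coadjU (g : ↥(algGrp F A)) (lam : A →ₗ[F] F) : A →ₗ[F] F where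
  toFun X := lam ((((g : (Unitization F A)ˣ) : Unitization F A) * (X : Unitization F A) *
    ((((g : (Unitization F A)ˣ))⁻¹ : (Unitization F A)ˣ) : Unitization F A)).snd)
  map_add' X Y := by
    try dsimp only
    rw [← map_add, ← Unitization.snd_add]
    refine congrArg lam (congrArg (fun x : Unitization F A => x.snd) ?_)
    rw [Unitization.inr_add]
    noncomm_ring
  map_smul' c X := by
    try dsimp only
    rw [RingHom.id_apply, ← map_smul, ← Unitization.snd_smul]
    refine congrArg lam (congrArg (fun x : Unitization F A => x.snd) ?_)
    rw [Unitization.inr_smul, mul_smul_comm, smul_mul_assoc]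

/-- The coadjoint orbit of `λ`. -/
def coadjOrbitU (lam : A →ₗ[F] F) : Set (A →ₗ[F] F) :=
  {nu | ∃ g : ↥(algGrp F A), nu = coadjU g lam}

/-- The Kirillov function `ψ_λ` of the algebra group `1 + A`. -/
def kirillovU (θ : AddChar F ℂ) (lam : A →ₗ[F] F) : ↥(algGrp F A) → ℂ := fun g =>
  ((Real.sqrt (Nat.card (coadjOrbitU lam)) : ℂ))⁻¹ *
    ∑ᶠ nu ∈ coadjOrbitU lam, thetaFunU θ nu g

/-- The underlying set of the algebra subgroup `L̄_λ = 1 + l̄_λ`. -/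
def LsetU (lam : A →ₗ[F] F) : Set ↥(algGrp F A) := {g | sndU g ∈ lbar lam}

/-- The underlying set of the algebra subgroup `S̄_λ = 1 + s̄_λ`. -/
def SsetU (lam : A →ₗ[F] F) : Set ↥(algGrp F A) := {g | sndU g ∈ sbar lam}

/-- The character `ξ_λ = Ind_{L̄_λ}^G(θ_λ)` of the algebra group `1 + A`. -/
def xiU (θ : AddChar F ℂ) (lam : A →ₗ[F] F) : ↥(algGrp F A) → ℂ :=
  indFun (LsetU lam) (thetaFunU θ lam)

/-- The set `Ξ_λ = {gλsg⁻¹ : g ∈ G, s ∈ S̄_λ}`, i.e. the functionals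
`ν(X) = λ(g⁻¹ X g s⁻¹)`. -/
def XiSet (lam : A →ₗ[F] F) : Set (A →ₗ[F] F) :=
  {nu | ∃ g s : ↥(algGrp F A), s ∈ SsetU lam ∧ ∀ X : A,
    nu X = lam (((((g : (Unitization F A)ˣ))⁻¹ : (Unitization F A)ˣ) * (X : Unitization F A) *
      ((g : (Unitization F A)ˣ) : Unitization F A) *
      ((((s : (Unitization F A)ˣ))⁻¹ : (Unitization F A)ˣ) : Unitization F A)).snd)}

end AlgebraGroup


/-- The right orbit `λG` of `λ` under `(λg)(X) = λ(Xg⁻¹)`. -/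
def rightOrbit {n : ℕ} {F : Type*} [Field F] [Fintype F]
    {S : NonUnitalSubalgebra F (Matrix (Fin n) (Fin n) F)} (lam : Dual S) : Set (Dual S) :=
  {nu | ∃ g : ↥(grp S), nu = conjDual 1 g⁻¹ lam}

/-- The set `⊥L_λ = {(i,j) ∈ P : ∃ k, λ_{ik} ≠ 0 and (j,k) ∈ P}`. -/
def perpL {n : ℕ} {F : Type*} [Field F] [Fintype F] (P : Set (Fin n × Fin n))
    {S : NonUnitalSubalgebra F (Matrix (Fin n) (Fin n) F)} (lam : Dual S) :
    Set (Fin n × Fin n) :=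
  {a | a ∈ P ∧ ∃ k : Fin n, lamEntry lam a.1 k ≠ 0 ∧ (a.2, k) ∈ P}

/-- The set `⊥S_λ = {(i,j) ∈ P : ∃ k, λ_{ik} ≠ 0, (j,k) ∈ P, (j,k) ∉ ⊥L_λ}`. -/
def perpS {n : ℕ} {F : Type*} [Field F] [Fintype F] (P : Set (Fin n × Fin n))
    {S : NonUnitalSubalgebra F (Matrix (Fin n) (Fin n) F)} (lam : Dual S) :
    Set (Fin n × Fin n) :=
  {a | a ∈ P ∧ ∃ k : Fin n, lamEntry lam a.1 k ≠ 0 ∧ (a.2, k) ∈ P ∧ (a.2, k) ∉ perpL P lam}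

section Statement9Aux

variable {n : ℕ} {F : Type} [Field F] [Fintype F] {P : Set (Fin n × Fin n)}
  {hC : IsClosedPositions P}

lemma mem_patAlg' {M : Matrix (Fin n) (Fin n) F} :
    M ∈ patAlg n F P hC ↔ ∀ i j : Fin n, (i, j) ∉ P → M i j = 0 := Iff.rfl

lemma std_mem {i j : Fin n} (h : (i, j) ∈ P) :
    Matrix.single i j (1 : F) ∈ patAlg n F P hC := by
  intro a b hab
  simp only [Matrix.single, Matrix.of_apply, ite_eq_right_iff]
  rintro ⟨rfl, rfl⟩
  exact absurd h hab

lemma lamEntry_eq (lam : Dual (patAlg n F P hC)) {i j : Fin n} (h : (i, j) ∈ P) :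
    lamEntry lam i j = lam ⟨Matrix.single i j 1, std_mem h⟩ :=
  dif_pos (std_mem h)

lemma mem_of_lamEntry_ne (lam : Dual (patAlg n F P hC)) {i j : Fin n}
    (h : lamEntry lam i j ≠ 0) : (i, j) ∈ P := by
  by_contra hij
  apply h
  rw [lamEntry, dif_neg]
  intro hmem
  have := hmem i j hij
  simp [Matrix.single] at this

lemma lam_expand (lam : Dual (patAlg n F P hC)) (Z : ↥(patAlg n F P hC)) :
    lam Z = ∑ i : Fin n, ∑ j : Fin n,
      (Z : Matrix (Fin n) (Fin n) F) i j * lamEntry lam i j := by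
  have hZ : Z = ∑ i : Fin n, ∑ j : Fin n,
      (if h : (i, j) ∈ P then (Z : Matrix (Fin n) (Fin n) F) i j •
        (⟨Matrix.single i j 1, std_mem h⟩ : ↥(patAlg n F P hC)) else 0) := by
    apply Subtype.ext
    push_cast
    conv_lhs => rw [Matrix.matrix_eq_sum_single
      (Z : Matrix (Fin n) (Fin n) F)]
    refine Finset.sum_congr rfl fun i _ => Finset.sum_congr rfl fun j _ => ?_
    by_cases h : (i, j) ∈ P
    · simp [h]
    · rw [dif_neg h]
      rw [Z.2 i j h]
      simp
  conv_lhs => rw [hZ]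
  rw [map_sum]
  refine Finset.sum_congr rfl fun i _ => ?_
  rw [map_sum]
  refine Finset.sum_congr rfl fun j _ => ?_
  by_cases h : (i, j) ∈ P
  · rw [dif_pos h, map_smul, lamEntry_eq lam h, smul_eq_mul]
  · rw [dif_neg h, map_zero, Z.2 i j h, zero_mul]

lemma lam_mul_std (lam : Dual (patAlg n F P hC)) (X : ↥(patAlg n F P hC))
    {j k : Fin n} (hk : (j, k) ∈ P) :
    lam (X * ⟨Matrix.single j k 1, std_mem hk⟩) =
      ∑ a : Fin n, (X : Matrix (Fin n) (Fin n) F) a j * lamEntry lam a k := by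
  rw [lam_expand]
  have hentry : ∀ a b : Fin n,
      ((X * ⟨Matrix.single j k 1, std_mem hk⟩ : ↥(patAlg n F P hC)) :
        Matrix (Fin n) (Fin n) F) a b =
      if k = b then (X : Matrix (Fin n) (Fin n) F) a j else 0 := by
    intro a b
    have : ((X * ⟨Matrix.single j k 1, std_mem hk⟩ : ↥(patAlg n F P hC)) :
        Matrix (Fin n) (Fin n) F) =
        (X : Matrix (Fin n) (Fin n) F) * Matrix.single j k 1 := rfl
    rw [this, Matrix.mul_apply]
    simp only [Matrix.single, Matrix.of_apply, mul_ite, mul_one, mul_zero]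
    by_cases hb : k = b
    · subst hb
      rw [if_pos rfl]
      rw [Finset.sum_eq_single j]
      · simp
      · intro c _ hc; simp [hc.symm]
      · simp
    · rw [if_neg hb]
      refine Finset.sum_eq_zero fun c _ => ?_
      rw [if_neg (by tauto)]
  refine Finset.sum_congr rfl fun a _ => ?_
  rw [Finset.sum_eq_single k]
  · rw [hentry a k, if_pos rfl]
  · intro b _ hb
    rw [hentry a b, if_neg (Ne.symm hb), zero_mul]
  · simp

lemma lam_mul_std_qm (lam : Dual (patAlg n F P hC)) (hqm : QuasiMonomial lam)
    (X : ↥(patAlg n F P hC)) {i j k : Fin n} (hk : (j, k) ∈ P)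
    (hlam : lamEntry lam i k ≠ 0) :
    lam (X * ⟨Matrix.single j k 1, std_mem hk⟩) =
      (X : Matrix (Fin n) (Fin n) F) i j * lamEntry lam i k := by
  rw [lam_mul_std lam X hk]
  refine Finset.sum_eq_single i ?_ (by simp)
  intro a _ ha
  by_cases h : lamEntry lam a k = 0
  · rw [h, mul_zero]
  · exact absurd (hqm.2 a i k h hlam) ha

lemma lam_mul_eq_zero (lam : Dual (patAlg n F P hC))
    (X Y : ↥(patAlg n F P hC))
    (h : ∀ i j k : Fin n, lamEntry lam i k ≠ 0 →
      (Y : Matrix (Fin n) (Fin n) F) j k ≠ 0 →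
      (X : Matrix (Fin n) (Fin n) F) i j = 0) :
    lam (X * Y) = 0 := by
  rw [lam_expand]
  refine Finset.sum_eq_zero fun i _ => Finset.sum_eq_zero fun k _ => ?_
  by_cases hlam : lamEntry lam i k = 0
  · rw [hlam, mul_zero]
  have hXY : ((X * Y : ↥(patAlg n F P hC)) : Matrix (Fin n) (Fin n) F) i k =
      ∑ j : Fin n, (X : Matrix (Fin n) (Fin n) F) i j *
        (Y : Matrix (Fin n) (Fin n) F) j k := by
    have : ((X * Y : ↥(patAlg n F P hC)) : Matrix (Fin n) (Fin n) F) =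
        (X : Matrix (Fin n) (Fin n) F) * (Y : Matrix (Fin n) (Fin n) F) := rfl
    rw [this, Matrix.mul_apply]
  rw [hXY]
  rw [Finset.sum_eq_zero, zero_mul]
  intro j _
  by_cases hY : (Y : Matrix (Fin n) (Fin n) F) j k = 0
  · rw [hY, mul_zero]
  · rw [h i j k hlam hY, zero_mul]

lemma mem_lC1 (lam : Dual (patAlg n F P hC)) (hqm : QuasiMonomial lam)
    (X : ↥(patAlg n F P hC)) :
    X ∈ lC lam 1 ↔ ∀ a ∈ perpL P lam, (X : Matrix (Fin n) (Fin n) F) a.1 a.2 = 0 := by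
  have hmem : X ∈ lC lam 1 ↔ ∀ Y : ↥(patAlg n F P hC), lam (X * Y) = 0 := by
    show X ∈ lker lam ⊤ ⊤ ↔ _
    exact ⟨fun h Y => h.2 Y trivial, fun h => ⟨trivial, fun Y _ => h Y⟩⟩
  rw [hmem]
  constructor
  · rintro h ⟨i, j⟩ ⟨haP, k, hlam, hjk⟩
    have := h ⟨Matrix.single j k 1, std_mem hjk⟩
    rw [lam_mul_std_qm lam hqm X hjk hlam] at this
    exact (mul_eq_zero.mp this).resolve_right hlam
  · intro h Y
    refine lam_mul_eq_zero lam X Y fun i j k hlam hY => ?_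
    by_cases hX : (X : Matrix (Fin n) (Fin n) F) i j = 0
    · exact hX
    · have hij : (i, j) ∈ P := by
        by_contra hij; exact hX (X.2 i j hij)
      have hjk : (j, k) ∈ P := by
        by_contra hjk; exact hY (Y.2 j k hjk)
      exact h (i, j) ⟨hij, k, hlam, hjk⟩

lemma mem_sC1 (lam : Dual (patAlg n F P hC)) (hqm : QuasiMonomial lam)
    (X : ↥(patAlg n F P hC)) :
    X ∈ sC lam 1 ↔ ∀ a ∈ perpS P lam, (X : Matrix (Fin n) (Fin n) F) a.1 a.2 = 0 := by
  have hmem : X ∈ sC lam 1 ↔ ∀ Y ∈ lC lam 1, lam (X * Y) = 0 := by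
    show X ∈ lker lam ⊤ (lker lam ⊤ ⊤) ↔ _
    exact ⟨fun h Y hY => h.2 Y hY, fun h => ⟨trivial, fun Y hY => h Y hY⟩⟩
  rw [hmem]
  constructor
  · rintro h ⟨i, j⟩ ⟨haP, k, hlam, hjk, hnL⟩
    have hE : (⟨Matrix.single j k 1, std_mem hjk⟩ : ↥(patAlg n F P hC)) ∈
        lC lam 1 := by
      rw [mem_lC1 lam hqm]
      rintro ⟨a, b⟩ hab
      simp only [Matrix.single, Matrix.of_apply, ite_eq_right_iff]
      rintro ⟨rfl, rfl⟩
      exact absurd hab hnL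
    have := h _ hE
    rw [lam_mul_std_qm lam hqm X hjk hlam] at this
    exact (mul_eq_zero.mp this).resolve_right hlam
  · intro h Y hY
    rw [mem_lC1 lam hqm] at hY
    refine lam_mul_eq_zero lam X Y fun i j k hlam hYjk => ?_
    by_cases hX : (X : Matrix (Fin n) (Fin n) F) i j = 0
    · exact hX
    · have hij : (i, j) ∈ P := by
        by_contra hij; exact hX (X.2 i j hij)
      have hjk : (j, k) ∈ P := by
        by_contra hjk; exact hYjk (Y.2 j k hjk)
      have hnL : (j, k) ∉ perpL P lam := fun hc => hYjk (hY (j, k) hc)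
      exact h (i, j) ⟨hij, k, hlam, hjk, hnL⟩

lemma perpL_empty (hP : ∀ a ∈ P, a.1 < a.2) (lam : Dual (patAlg n F P hC))
    (hS : perpS P lam = ∅) : perpL P lam = ∅ := by
  have key : ∀ m : ℕ, ∀ a : Fin n × Fin n, n - (a.2 : ℕ) ≤ m → a ∉ perpL P lam := by
    intro m
    induction m with
    | zero =>
      intro a hm ha
      have := a.2.isLt
      omega
    | succ m ih =>
      rintro ⟨i, j⟩ hm ⟨haP, k, hlam, hjk⟩
      have hjkL : (j, k) ∈ perpL P lam := by
        by_contra hnL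
        have : ((i, j) : Fin n × Fin n) ∈ perpS P lam := ⟨haP, k, hlam, hjk, hnL⟩
        rw [hS] at this
        exact this
      have hlt : (j : ℕ) < (k : ℕ) := hP _ hjk
      have hm' : n - (j : ℕ) ≤ m + 1 := hm
      exact ih (j, k) (show n - (k : ℕ) ≤ m by omega) hjkL
  ext a
  simp only [Set.mem_empty_iff_false, iff_false]
  exact key (n - (a.2 : ℕ)) a le_rfl

end Statement9Aux

/-- For a quasi-monomial `λ` on a pattern algebra, if `⊥S_λ = ∅` then
`⊥L_λ = ∅`; equivalently, if `s¹_λ = n` then `l¹_λ = n`, i.e. `λ(XY) = 0` for all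
`X, Y ∈ n`. -/
theorem statement9 (p : ℕ) (hp : p.Prime) (F : Type) [Field F] [Fintype F] [CharP F p]
    (n : ℕ) (P : Set (Fin n × Fin n)) (hP : ∀ a ∈ P, a.1 < a.2) (hC : IsClosedPositions P)
    (lam : Dual (patAlg n F P hC)) (hqm : QuasiMonomial lam) :
    (perpS P lam = ∅ → perpL P lam = ∅) ∧
    (sC lam 1 = ⊤ → lC lam 1 = ⊤) ∧
    (sC lam 1 = ⊤ → ∀ X Y : ↥(patAlg n F P hC), lam (X * Y) = 0) := by
  have h1 : perpS P lam = ∅ → perpL P lam = ∅ := perpL_empty hP lam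
  have hS : sC lam 1 = ⊤ → perpS P lam = ∅ := by
    intro hs
    ext a
    simp only [Set.mem_empty_iff_false, iff_false]
    intro ha
    have haP : a ∈ P := ha.1
    have hmem : (⟨Matrix.single a.1 a.2 1, std_mem haP⟩ : ↥(patAlg n F P hC)) ∈
        sC lam 1 := hs ▸ trivial
    rw [mem_sC1 lam hqm] at hmem
    have := hmem a ha
    simp [Matrix.single] at this
  have h2 : sC lam 1 = ⊤ → lC lam 1 = ⊤ := by
    intro hs
    have hL : perpL P lam = ∅ := h1 (hS hs)
    rw [eq_top_iff]
    intro X _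
    rw [mem_lC1 lam hqm]
    intro a ha
    rw [hL] at ha
    exact absurd ha (Set.notMem_empty a)
  refine ⟨h1, h2, fun hs X Y => ?_⟩
  have hX : X ∈ lC lam 1 := (h2 hs) ▸ trivial
  exact hX.2 Y trivial

end Paper
end
end

section
/- Let n > 1. The Kirillov function ψ_κ of A_n(q) equals the function θ_κ : A_n(q) → ℂ given by θ_κ(g) = θ(g_{1,n}), and ψ_κ is a character of A_n(q) if and only if n = 2 (equivalently, g ↦ θ(g_{1,n}) is a group homomorphism A_n(q) → ℂ^× if and only if n = 2). -/
open scoped BigOperators Classical ComplexOrder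
open Complex

set_option linter.unusedSectionVars false

noncomputable section

namespace Paper

variable {F : Type*} [Field F]

/-! ### Algebra groups of matrix algebras -/

variable {n : ℕ}

variable [Fintype F] {S : NonUnitalSubalgebra F (Matrix (Fin n) (Fin n) F)}

/-- The functional `κ ∈ a_n(q)*`, `κ(X) = X_{1,n}`. -/
def kappaDual (n : ℕ) (hn : 1 < n) (F : Type) [Field F] [Fintype F] : Dual (aAlg n F) :=
  coordFn (aAlg n F) (⟨0, by omega⟩, ⟨n - 1, by omega⟩)

/-! ### Auxiliary lemmas for Statement 11 -/

section Aux11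

variable {F : Type} [Field F] [Fintype F] {n : ℕ}

/-- Matrices satisfying `aCond` commute. -/
lemma aCond_comm {X Y : Matrix (Fin n) (Fin n) F}
    (hX : aCond X) (hY : aCond Y) : X * Y = Y * X := by
  ext i j
  by_cases hij : (i : ℕ) < (j : ℕ)
  swap
  · have hji : j ≤ i := by rw [Fin.le_def]; omega
    rw [(aCond_mul hX hY).1 i j hji, (aCond_mul hY hX).1 i j hji]
  obtain ⟨hXu, hXc⟩ := hX
  obtain ⟨hYu, hYc⟩ := hY
  rw [Matrix.mul_apply, Matrix.mul_apply]
  have h1 : ∀ k : Fin n, ¬((i : ℕ) < (k : ℕ) ∧ (k : ℕ) < (j : ℕ)) → X i k * Y k j = 0 := by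
    intro k hk
    by_cases h : (i : ℕ) < (k : ℕ)
    · rw [hYu k j (by rw [Fin.le_def]; omega), mul_zero]
    · rw [hXu i k (by rw [Fin.le_def]; omega), zero_mul]
  have h2 : ∀ k : Fin n, ¬((i : ℕ) < (k : ℕ) ∧ (k : ℕ) < (j : ℕ)) → Y i k * X k j = 0 := by
    intro k hk
    by_cases h : (i : ℕ) < (k : ℕ)
    · rw [hXu k j (by rw [Fin.le_def]; omega), mul_zero]
    · rw [hYu i k (by rw [Fin.le_def]; omega), zero_mul]
  have e1 : ∑ k : Fin n, X i k * Y k j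
      = ∑ k ∈ Finset.univ.filter (fun k : Fin n => (i : ℕ) < (k : ℕ) ∧ (k : ℕ) < (j : ℕ)),
        X i k * Y k j := by
    refine (Finset.sum_filter_of_ne fun k _ hk => ?_).symm
    by_contra hp
    exact hk (h1 k hp)
  have e2 : ∑ k : Fin n, Y i k * X k j
      = ∑ k ∈ Finset.univ.filter (fun k : Fin n => (i : ℕ) < (k : ℕ) ∧ (k : ℕ) < (j : ℕ)),
        Y i k * X k j := by
    refine (Finset.sum_filter_of_ne fun k _ hk => ?_).symm
    by_contra hp
    exact hk (h2 k hp)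
  rw [e1, e2]
  refine Finset.sum_bij'
    (fun (k : Fin n) (hk : k ∈ Finset.univ.filter
        (fun k : Fin n => (i : ℕ) < (k : ℕ) ∧ (k : ℕ) < (j : ℕ))) =>
      (⟨(i : ℕ) + (j : ℕ) - (k : ℕ), by
        have h1 := (Finset.mem_filter.mp hk).2
        have h2 := j.isLt
        omega⟩ : Fin n))
    (fun (k : Fin n) (hk : k ∈ Finset.univ.filter
        (fun k : Fin n => (i : ℕ) < (k : ℕ) ∧ (k : ℕ) < (j : ℕ))) =>
      (⟨(i : ℕ) + (j : ℕ) - (k : ℕ), by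
        have h1 := (Finset.mem_filter.mp hk).2
        have h2 := j.isLt
        omega⟩ : Fin n))
    ?_ ?_ ?_ ?_ ?_
  · intro k hk
    have h := (Finset.mem_filter.mp hk).2
    simp only [Finset.mem_filter, Finset.mem_univ, true_and, Fin.val_mk]
    omega
  · intro k hk
    have h := (Finset.mem_filter.mp hk).2
    simp only [Finset.mem_filter, Finset.mem_univ, true_and, Fin.val_mk]
    omega
  · intro k hk
    have h := (Finset.mem_filter.mp hk).2
    exact Fin.ext (by simp only [Fin.val_mk]; omega)
  · intro k hk
    have h := (Finset.mem_filter.mp hk).2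
    exact Fin.ext (by simp only [Fin.val_mk]; omega)
  · intro k hk
    have h := (Finset.mem_filter.mp hk).2
    have hjlt := j.isLt
    set m : Fin n := ⟨(i : ℕ) + (j : ℕ) - (k : ℕ), by omega⟩ with hm
    have hx : X i k = X m j := by
      refine hXc i k m j h.1 ?_ ?_
      · simp only [hm, Fin.val_mk]; omega
      · simp only [hm, Fin.val_mk]; omega
    have hy : Y k j = Y i m := by
      refine hYc k j i m h.2 ?_ ?_
      · simp only [hm, Fin.val_mk]; omega
      · simp only [hm, Fin.val_mk]; omega
    rw [hx, hy]
    ring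

/-- Elements of the algebra group `A_n(q)` commute with matrices in `a_n(q)`. -/
lemma mat_comm_aAlg (g : ↥(grp (aAlg n F))) {X : Matrix (Fin n) (Fin n) F}
    (hX : X ∈ aAlg n F) : mat g * X = X * mat g := by
  have h : (mat g - 1) * X = X * (mat g - 1) := aCond_comm (mat_mem g) hX
  have h2 : mat g * X - X = X * mat g - X := by
    calc mat g * X - X = (mat g - 1) * X := by noncomm_ring
    _ = X * (mat g - 1) := h
    _ = X * mat g - X := by noncomm_ring
  exact sub_left_injective h2

lemma mat_mul_mat_inv {S : NonUnitalSubalgebra F (Matrix (Fin n) (Fin n) F)}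
    (g : ↥(grp S)) : mat g * mat g⁻¹ = 1 := by
  have : mat g⁻¹ = (((g : (Matrix (Fin n) (Fin n) F)ˣ))⁻¹ :
      (Matrix (Fin n) (Fin n) F)ˣ) := by
    rw [mat, InvMemClass.coe_inv]
  rw [this, mat]
  exact Units.mul_inv _

lemma conjDual_inv_eq (hn : 1 < n) (g : ↥(grp (aAlg n F))) :
    conjDual g g⁻¹ (kappaDual n hn F) = kappaDual n hn F := by
  refine LinearMap.ext fun X => ?_
  have hm : mat g * (X : Matrix (Fin n) (Fin n) F) * mat g⁻¹
      = (X : Matrix (Fin n) (Fin n) F) := by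
    rw [mat_comm_aAlg g X.2, mul_assoc, mat_mul_mat_inv, mul_one]
  have hq : (conjDual g g⁻¹ (kappaDual n hn F)) X
      = (kappaDual n hn F) ⟨mat g * (X : Matrix (Fin n) (Fin n) F) * mat g⁻¹,
          conj_mem g g⁻¹ X.2⟩ := rfl
  rw [hq]
  exact congrArg _ (Subtype.ext hm)

lemma coadjOrbit_kappa (hn : 1 < n) :
    coadjOrbit (kappaDual n hn F) = {kappaDual n hn F} := by
  ext ν
  constructor
  · rintro ⟨g, rfl⟩
    exact (conjDual_inv_eq hn g)
  · rintro rfl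
    exact ⟨1, (conjDual_inv_eq hn 1).symm⟩

lemma kirillov_kappa (hn : 1 < n) (θ : AddChar F ℂ) :
    kirillov θ (kappaDual n hn F) = thetaFun θ (kappaDual n hn F) := by
  funext g
  rw [kirillov, coadjOrbit_kappa hn, finsum_mem_singleton]
  have h1 : Nat.card ({kappaDual n hn F} : Set (Dual (aAlg n F))) = 1 := Nat.card_unique
  rw [h1]
  norm_num

/-- `gsub` of a product. -/
lemma gsub_mul {S : NonUnitalSubalgebra F (Matrix (Fin n) (Fin n) F)} (g h : ↥(grp S)) :
    (gsub (g * h) : Matrix (Fin n) (Fin n) F)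
      = (gsub g : Matrix (Fin n) (Fin n) F) + gsub h
        + (gsub g : Matrix (Fin n) (Fin n) F) * gsub h := by
  show mat (g * h) - 1 = (mat g - 1) + (mat h - 1) + (mat g - 1) * (mat h - 1)
  have hmat : mat (g * h) = mat g * mat h := by
    rw [mat, mat, mat]
    norm_cast
  rw [hmat]
  noncomm_ring

lemma gsub_one {S : NonUnitalSubalgebra F (Matrix (Fin n) (Fin n) F)} :
    (gsub (1 : ↥(grp S)) : Matrix (Fin n) (Fin n) F) = 0 := by
  show mat (1 : ↥(grp S)) - 1 = 0
  have : mat (1 : ↥(grp S)) = 1 := by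
    rw [mat]
    norm_cast
  rw [this, sub_self]

/-- The superdiagonal matrix `c · Jᵃ`. -/
def sdMat (n : ℕ) (F : Type) [Field F] (a : ℕ) (c : F) : Matrix (Fin n) (Fin n) F :=
  fun i j => if (j : ℕ) = (i : ℕ) + a then c else 0

lemma sdMat_mem {a : ℕ} (ha : 1 ≤ a) (c : F) : sdMat n F a c ∈ aAlg n F := by
  rw [mem_aAlg]
  refine ⟨fun i j hij => ?_, fun i j i' j' h1 h2 h3 => ?_⟩
  · rw [Fin.le_def] at hij
    exact if_neg (by omega)
  · show (if (j : ℕ) = (i : ℕ) + a then c else 0)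
        = (if (j' : ℕ) = (i' : ℕ) + a then c else 0)
    by_cases h : (j : ℕ) = (i : ℕ) + a
    · rw [if_pos h, if_pos (by omega)]
    · rw [if_neg h, if_neg (by omega)]

lemma sdMat_mul (a b : ℕ) (c d : F) :
    sdMat n F a c * sdMat n F b d = sdMat n F (a + b) (c * d) := by
  ext i j
  rw [Matrix.mul_apply]
  show _ = (if (j : ℕ) = (i : ℕ) + (a + b) then c * d else 0)
  by_cases h : (j : ℕ) = (i : ℕ) + (a + b)
  · have hia : (i : ℕ) + a < n := by have := j.isLt; omega
    rw [if_pos h]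
    rw [Finset.sum_eq_single_of_mem (⟨(i : ℕ) + a, hia⟩ : Fin n) (Finset.mem_univ _)
      (fun k _ hk => ?_)]
    · show (if (((⟨(i : ℕ) + a, hia⟩ : Fin n)) : ℕ) = (i : ℕ) + a then c else 0) *
          (if (j : ℕ) = ((⟨(i : ℕ) + a, hia⟩ : Fin n) : ℕ) + b then d else 0) = c * d
      rw [if_pos rfl, if_pos (by simp only [Fin.val_mk]; omega)]
    · show (if (k : ℕ) = (i : ℕ) + a then c else 0) *
          (if (j : ℕ) = (k : ℕ) + b then d else 0) = 0
      by_cases hk1 : (k : ℕ) = (i : ℕ) + a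
      · exact absurd (Fin.ext hk1) hk
      · rw [if_neg hk1, zero_mul]
  · rw [if_neg h]
    
    refine Finset.sum_eq_zero fun k _ => ?_
    show (if (k : ℕ) = (i : ℕ) + a then c else 0) *
        (if (j : ℕ) = (k : ℕ) + b then d else 0) = 0
    by_cases hk1 : (k : ℕ) = (i : ℕ) + a
    · rw [if_pos hk1, if_neg (by omega), mul_zero]
    · rw [if_neg hk1, zero_mul]

lemma sdMat_eq_zero {a : ℕ} (ha : n ≤ a) (c : F) : sdMat n F a c = 0 := by
  ext i j
  have := j.isLt
  exact if_neg (by omega)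

lemma sdMat_pow (a : ℕ) (c : F) (k : ℕ) :
    sdMat n F a c ^ (k + 1) = sdMat n F ((k + 1) * a) (c ^ (k + 1)) := by
  induction k with
  | zero => simp
  | succ m ih =>
    rw [pow_succ, ih, sdMat_mul, ← pow_succ]
    congr 1
    ring

lemma sdMat_nilpotent {a : ℕ} (ha : 1 ≤ a) (hn : 1 ≤ n) (c : F) :
    IsNilpotent (sdMat n F a c) := by
  refine ⟨n, ?_⟩
  have h0 : n = (n - 1) + 1 := by omega
  rw [h0, sdMat_pow]
  refine sdMat_eq_zero ?_ _
  have h1 : n - 1 + 1 = n := by omega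
  rw [h1]
  calc n = n * 1 := (mul_one n).symm
    _ ≤ n * a := Nat.mul_le_mul_left n ha

/-- The element `1 + c·Jᵃ` of the algebra group `A_n(q)`. -/
def sdGrp (a : ℕ) (ha : 1 ≤ a) (hn : 1 ≤ n) (c : F) : ↥(grp (aAlg n F)) :=
  ⟨((sdMat_nilpotent ha hn c).isUnit_one_add).unit, by
    rw [mem_grp_iff, IsUnit.unit_spec, add_sub_cancel_left]
    exact sdMat_mem ha c⟩

lemma gsub_sdGrp (a : ℕ) (ha : 1 ≤ a) (hn : 1 ≤ n) (c : F) :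
    (gsub (sdGrp a ha hn c) : Matrix (Fin n) (Fin n) F) = sdMat n F a c := by
  show mat (sdGrp a ha hn c) - 1 = sdMat n F a c
  have : mat (sdGrp a ha hn c) = 1 + sdMat n F a c := IsUnit.unit_spec _
  rw [this, add_sub_cancel_left]

lemma kappa_apply (hn : 1 < n) (X : ↥(aAlg n F)) :
    kappaDual n hn F X
      = (X : Matrix (Fin n) (Fin n) F) ⟨0, by omega⟩ ⟨n - 1, by omega⟩ := rfl

lemma thetaFun_sdGrp (hn : 1 < n) (θ : AddChar F ℂ) (a : ℕ) (ha : 1 ≤ a) (hn1 : 1 ≤ n)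
    (c : F) :
    thetaFun θ (kappaDual n hn F) (sdGrp a ha hn1 c)
      = θ (if n - 1 = a then c else 0) := by
  rw [thetaFun]
  congr 1
  rw [kappa_apply]
  have h := gsub_sdGrp a ha hn1 c
  rw [h]
  show (if ((⟨n - 1, by omega⟩ : Fin n) : ℕ) = ((⟨0, by omega⟩ : Fin n) : ℕ) + a then c else 0)
      = (if n - 1 = a then c else 0)
  simp only [Fin.val_mk, Nat.zero_add]

/-- For `n = 2`, products in `a_2(q)` vanish. -/
lemma aAlg_mul_zero_of_two {X Y : Matrix (Fin 2) (Fin 2) F}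
    (hX : X ∈ aAlg 2 F) (hY : Y ∈ aAlg 2 F) : X * Y = 0 := by
  ext i j
  rw [Matrix.mul_apply, Fin.sum_univ_two]
  rw [hX.1 i 0 (Fin.zero_le i), hY.1 1 j (Fin.le_last j), zero_mul, mul_zero, add_zero,
    Matrix.zero_apply]

/-- For `n = 2`, `θ_κ` is multiplicative. -/
lemma thetaFun_mul_of_two (hn : 1 < 2) (θ : AddChar F ℂ) (g h : ↥(grp (aAlg 2 F))) :
    thetaFun θ (kappaDual 2 hn F) (g * h)
      = thetaFun θ (kappaDual 2 hn F) g * thetaFun θ (kappaDual 2 hn F) h := by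
  have hsub : gsub (g * h) = gsub g + gsub h := by
    refine Subtype.ext ?_
    rw [gsub_mul, aAlg_mul_zero_of_two (gsub g).2 (gsub h).2, add_zero]
    rfl
  rw [thetaFun, thetaFun, thetaFun, hsub, map_add, AddChar.map_add_eq_mul]

/-- Multiplicativity of the trace on endomorphisms of a `1`-dimensional space. -/
lemma trace_mul_of_finrank_one {M : Type*} [AddCommGroup M] [Module ℂ M]
    [FiniteDimensional ℂ M] (h : Module.finrank ℂ M = 1) (f g : M →ₗ[ℂ] M) :
    LinearMap.trace ℂ M (f * g) = LinearMap.trace ℂ M f * LinearMap.trace ℂ M g := by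
  let b := Module.finBasisOfFinrankEq ℂ M h
  rw [LinearMap.trace_eq_matrix_trace ℂ b, LinearMap.trace_eq_matrix_trace ℂ b f,
    LinearMap.trace_eq_matrix_trace ℂ b g]
  have : LinearMap.toMatrix b b (f * g) = LinearMap.toMatrix b b f * LinearMap.toMatrix b b g :=
    LinearMap.toMatrix_mul b f g
  rw [this, Matrix.trace_fin_one, Matrix.trace_fin_one, Matrix.trace_fin_one,
    Matrix.mul_apply, Fin.sum_univ_one]

lemma thetaFun_kappa_one (hn : 1 < n) (θ : AddChar F ℂ) :
    thetaFun θ (kappaDual n hn F) 1 = 1 := by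
  rw [thetaFun, kappa_apply, gsub_one, Matrix.zero_apply, AddChar.map_zero_eq_one]

/-- A multiplicative degree-one function with `f 1 = 1` lifts to a homomorphism
into `ℂˣ`. -/
lemma exists_hom_of_mul {G : Type*} [Group G] {f : G → ℂ} (h1 : f 1 = 1)
    (hmul : ∀ g h : G, f (g * h) = f g * f h) :
    ∃ φ : G →* ℂˣ, ∀ g, f g = φ g := by
  have hinv : ∀ g : G, f g * f g⁻¹ = 1 := fun g => by
    rw [← hmul, mul_inv_cancel, h1]
  refine ⟨{ toFun := fun g => Units.mk (f g) (f g⁻¹) (hinv g)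
              (by rw [mul_comm]; exact hinv g)
            map_one' := by
              refine Units.ext ?_
              show f 1 = 1
              exact h1
            map_mul' := fun g h => by
              refine Units.ext ?_
              show f (g * h) = f g * f h
              exact hmul g h }, fun g => rfl⟩

/-- A degree-one character is multiplicative and nonvanishing, hence lifts to a
homomorphism into `ℂˣ`. -/
lemma exists_hom_of_isCharacter {G : Type} [Group G] {f : G → ℂ}
    (hf : IsCharacter f) (h1 : f 1 = 1) :
    ∃ φ : G →* ℂˣ, ∀ g, f g = φ g := by
  obtain ⟨V, hV⟩ := hf
  have hrk : Module.finrank ℂ V = 1 := by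
    have := FDRep.char_one V
    rw [hV, h1] at this
    exact_mod_cast this.symm
  have hmul : ∀ g h : G, f (g * h) = f g * f h := by
    intro g h
    rw [← hV]
    show LinearMap.trace ℂ V (V.ρ (g * h)) = _
    rw [map_mul, trace_mul_of_finrank_one hrk]
    rfl
  exact exists_hom_of_mul h1 hmul

/-- A homomorphism into `ℂˣ` is a character (of the associated one-dimensional
representation). -/
lemma isCharacter_of_hom {G : Type} [Group G] (φ : G →* ℂˣ) {f : G → ℂ}
    (hf : ∀ g, f g = φ g) : IsCharacter f := by
  let ρ : Representation ℂ G ℂ :=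
    { toFun := fun g => ((φ g : ℂ) • LinearMap.id)
      map_one' := by
        simp only [map_one, Units.val_one, one_smul]
        rfl
      map_mul' := fun g h => LinearMap.ext fun x => by
        simp only [map_mul, Units.val_mul, LinearMap.smul_apply, LinearMap.id_apply,
          Module.End.mul_apply, smul_eq_mul]
        ring }
  refine ⟨FDRep.of ρ, ?_⟩
  funext g
  show LinearMap.trace ℂ ℂ (ρ g) = f g
  show LinearMap.trace ℂ ℂ ((φ g : ℂ) • LinearMap.id) = f g
  rw [map_smul, LinearMap.trace_id, hf g]
  simp

end Aux11

/-- The Kirillov function `ψ_κ` of `A_n(q)` equals `θ_κ`, and it is a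
character of `A_n(q)` if and only if `n = 2` (equivalently, `θ_κ` is a group homomorphism
to `ℂ^×` if and only if `n = 2`). -/
theorem statement11 (p : ℕ) (hp : p.Prime) (F : Type) [Field F] [Fintype F] [CharP F p]
    (θ : AddChar F ℂ) (hθ : θ ≠ 1) (n : ℕ) (hn : 1 < n) :
    kirillov θ (kappaDual n hn F) = thetaFun θ (kappaDual n hn F) ∧
    (IsCharacter (kirillov θ (kappaDual n hn F)) ↔ n = 2) ∧
    ((∃ φ : ↥(grp (aAlg n F)) →* ℂˣ, ∀ g, thetaFun θ (kappaDual n hn F) g = φ g) ↔ n = 2) := by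
  have hkir := kirillov_kappa (F := F) hn θ
  have key : (∃ φ : ↥(grp (aAlg n F)) →* ℂˣ, ∀ g, thetaFun θ (kappaDual n hn F) g = φ g)
      ↔ n = 2 := by
    constructor
    · rintro ⟨φ, hφ⟩
      by_contra hne
      have hn3 : 3 ≤ n := by omega
      obtain ⟨c, hc⟩ := AddChar.ne_one_iff.mp hθ
      have hn1 : 1 ≤ n := by omega
      have hb : 1 ≤ n - 2 := by omega
      set g := sdGrp (n := n) (F := F) 1 le_rfl hn1 c with hgdef
      set h := sdGrp (n := n) (F := F) (n - 2) hb hn1 (1 : F) with hhdef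
      have hg : thetaFun θ (kappaDual n hn F) g = 1 := by
        rw [hgdef, thetaFun_sdGrp hn θ 1 le_rfl hn1 c, if_neg (by omega),
          AddChar.map_zero_eq_one]
      have hh : thetaFun θ (kappaDual n hn F) h = 1 := by
        rw [hhdef, thetaFun_sdGrp hn θ (n - 2) hb hn1 1, if_neg (by omega),
          AddChar.map_zero_eq_one]
      have hgh : thetaFun θ (kappaDual n hn F) (g * h) = θ c := by
        rw [thetaFun]
        congr 1
        rw [kappa_apply]
        have hmat : (gsub (g * h) : Matrix (Fin n) (Fin n) F)
            = sdMat n F 1 c + sdMat n F (n - 2) 1 + sdMat n F (n - 1) c := by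
          rw [gsub_mul, hgdef, hhdef, gsub_sdGrp, gsub_sdGrp, sdMat_mul]
          have h1 : 1 + (n - 2) = n - 1 := by omega
          rw [h1, mul_one]
        rw [hmat, Matrix.add_apply, Matrix.add_apply]
        show (if ((⟨n - 1, by omega⟩ : Fin n) : ℕ)
              = ((⟨0, by omega⟩ : Fin n) : ℕ) + 1 then c else 0)
            + (if ((⟨n - 1, by omega⟩ : Fin n) : ℕ)
              = ((⟨0, by omega⟩ : Fin n) : ℕ) + (n - 2) then (1 : F) else 0)
            + (if ((⟨n - 1, by omega⟩ : Fin n) : ℕ)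
              = ((⟨0, by omega⟩ : Fin n) : ℕ) + (n - 1) then c else 0) = c
        simp only [Fin.val_mk]
        rw [if_neg (by omega), if_neg (by omega), if_pos (by omega)]
        ring
      have hcontr : θ c = 1 := by
        rw [← hgh, hφ (g * h), map_mul, Units.val_mul, ← hφ g, ← hφ h, hg, hh, mul_one]
      exact hc hcontr
    · rintro rfl
      exact exists_hom_of_mul (thetaFun_kappa_one hn θ) (thetaFun_mul_of_two hn θ)
  refine ⟨hkir, ?_, key⟩
  rw [hkir]
  constructor
  · intro hch
    exact key.mp (exists_hom_of_isCharacter hch (thetaFun_kappa_one hn θ))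
  · rintro rfl
    obtain ⟨φ, hφ⟩ := key.mpr rfl
    exact isCharacter_of_hom φ hφ

end Paper
end
end

section
/- Let λ, μ ∈ u_n(q)* be quasi-monomial maps with the same shape. Then there exists an invertible diagonal matrix D ∈ GL_n(F_q) such that χ_μ(g) = χ_λ(D g D^{−1}) for all g ∈ UT_n(q). In other words, the group of automorphisms of UT_n(q) of the form g ↦ DgD^{−1} with D diagonal acts transitively on the set of supercharacters of UT_n(q) with a given shape. -/
open scoped BigOperators Classical ComplexOrder
open Complex

set_option linter.unusedSectionVars false

noncomputable section

namespace Paper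

variable {F : Type*} [Field F]

/-! ### Algebra groups of matrix algebras -/

variable {n : ℕ}

variable [Fintype F] {S : NonUnitalSubalgebra F (Matrix (Fin n) (Fin n) F)}

/-! ### Auxiliary development for statement 15 -/

section Stmt15Aux

variable {F : Type} [Field F] [Fintype F] {n : ℕ}

lemma std_mem_uAlg {i j : Fin n} (h : i < j) :
    Matrix.single i j (1 : F) ∈ uAlg n F := by
  intro a b hba
  apply Matrix.single_apply_of_ne
  rintro ⟨rfl, rfl⟩
  exact absurd h (not_lt.2 hba)

lemma lamEntry_eq_zero_of_not_lt (ν : Dual (uAlg n F)) {i j : Fin n} (h : ¬ i < j) :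
    lamEntry ν i j = 0 := by
  have hnot : Matrix.single i j (1 : F) ∉ uAlg n F := by
    intro hmem
    have := hmem i j (not_lt.1 h)
    rw [Matrix.single_apply_same] at this
    exact one_ne_zero this
  exact dif_neg hnot

lemma lt_of_lamEntry_ne_zero {ν : Dual (uAlg n F)} {i j : Fin n}
    (h : lamEntry ν i j ≠ 0) : i < j := by
  by_contra hc
  exact h (lamEntry_eq_zero_of_not_lt ν hc)

/-- Reachability by a chain of nonzero entries. -/
def Rch (ν : Dual (uAlg n F)) : Fin n → Fin n → Prop :=
  Relation.ReflTransGen (fun a b => lamEntry ν a b ≠ 0)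

lemma Rch.le {ν : Dual (uAlg n F)} {a b : Fin n} (h : Rch ν a b) : a ≤ b := by
  induction h with
  | refl => exact le_refl _
  | tail _ h2 ih => exact le_trans ih (le_of_lt (lt_of_lamEntry_ne_zero h2))

lemma rch_comparable_tgt {ν : Dual (uAlg n F)} (hq : QuasiMonomial ν) {x z : Fin n}
    (hxz : Rch ν x z) : ∀ y, Rch ν y z → Rch ν x y ∨ Rch ν y x := by
  induction hxz with
  | refl => exact fun y hy => Or.inr hy
  | @tail w z hxw hwz ih =>
    intro y hyz
    rcases Relation.ReflTransGen.cases_tail hyz with h | ⟨w', hyw', hw'z⟩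
    · subst h
      exact Or.inl (hxw.tail hwz)
    · have hww : w' = w := hq.2 w' w z hw'z hwz
      subst hww
      exact ih y hyw'

lemma rch_next {ν : Dual (uAlg n F)} (hq : QuasiMonomial ν) {i j k : Fin n}
    (hij : lamEntry ν i j ≠ 0) (hik : Rch ν i k) (hne : i ≠ k) : Rch ν j k := by
  rcases Relation.ReflTransGen.cases_head hik with h | ⟨w, hiw, hwk⟩
  · exact absurd h hne
  · have hwj : w = j := hq.1 i w j hiw hij
    subst hwj
    exact hwk

lemma rch_comparable_src {ν : Dual (uAlg n F)} (hq : QuasiMonomial ν) {x a c : Fin n}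
    (hxa : Rch ν x a) (hxc : Rch ν x c) : Rch ν a c ∨ Rch ν c a := by
  induction hxa using Relation.ReflTransGen.head_induction_on with
  | refl => exact Or.inl hxc
  | @head x w hxw hwa ih =>
    by_cases hxc' : x = c
    · subst hxc'
      exact Or.inr (Relation.ReflTransGen.head hxw hwa)
    · exact ih (rch_next hq hxw hxc hxc')

lemma eqvGen_rch {ν : Dual (uAlg n F)} (hq : QuasiMonomial ν) {i j : Fin n}
    (h : Relation.EqvGen (fun a b => lamEntry ν a b ≠ 0 ∨ lamEntry ν b a ≠ 0) i j) :
    Rch ν i j ∨ Rch ν j i := by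
  induction h with
  | rel a b hab =>
    rcases hab with h' | h'
    · exact Or.inl (Relation.ReflTransGen.single h')
    · exact Or.inr (Relation.ReflTransGen.single h')
  | refl a => exact Or.inl Relation.ReflTransGen.refl
  | symm a b _ ih => exact ih.symm
  | trans a b c _ _ ih1 ih2 =>
    rcases ih1 with h1 | h1 <;> rcases ih2 with h2 | h2
    · exact Or.inl (h1.trans h2)
    · exact rch_comparable_tgt hq h1 c h2
    · exact rch_comparable_src hq h1 h2
    · exact Or.inr (h2.trans h1)

/-- The shape class of `i`. -/
def clsOf (ν : Dual (uAlg n F)) (i : Fin n) : Set (Fin n) :=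
  {j | Relation.EqvGen (fun a b => lamEntry ν a b ≠ 0 ∨ lamEntry ν b a ≠ 0) i j}

lemma clsOf_eq_of_shape {lam mu : Dual (uAlg n F)}
    (hshape : shapeClasses lam = shapeClasses mu) (i : Fin n) :
    clsOf lam i = clsOf mu i := by
  have h1 : clsOf lam i ∈ shapeClasses mu := by
    rw [← hshape]; exact ⟨i, rfl⟩
  obtain ⟨i', hi'⟩ := h1
  have hii' : Relation.EqvGen
      (fun a b => lamEntry mu a b ≠ 0 ∨ lamEntry mu b a ≠ 0) i' i := by
    have hmem : i ∈ clsOf lam i := Relation.EqvGen.refl i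
    rw [hi'] at hmem
    exact hmem
  rw [hi']
  ext j
  constructor
  · intro hj
    exact Relation.EqvGen.trans _ _ _ (Relation.EqvGen.symm _ _ hii') hj
  · intro hj
    exact Relation.EqvGen.trans _ _ _ hii' hj

lemma supp_subset {lam mu : Dual (uAlg n F)}
    (hlam : QuasiMonomial lam) (hmu : QuasiMonomial mu)
    (hshape : shapeClasses lam = shapeClasses mu) {i j : Fin n}
    (h : lamEntry lam i j ≠ 0) : lamEntry mu i j ≠ 0 := by
  have hij : i < j := lt_of_lamEntry_ne_zero h
  have hcls : j ∈ clsOf mu i := by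
    rw [← clsOf_eq_of_shape hshape]
    exact Relation.EqvGen.rel i j (Or.inl h)
  have hr : Rch mu i j := by
    rcases eqvGen_rch hmu hcls with h' | h'
    · exact h'
    · exact absurd h'.le (not_le.2 hij)
  rcases Relation.ReflTransGen.cases_head hr with heq | ⟨k, hik, hkj⟩
  · exact absurd heq (ne_of_lt hij)
  · by_cases hkj' : k = j
    · subst hkj'; exact hik
    · exfalso
      have hkltj : k < j := lt_of_le_of_ne (Rch.le hkj) hkj'
      have hclsk : k ∈ clsOf lam i := by
        rw [clsOf_eq_of_shape hshape]
        exact Relation.EqvGen.rel i k (Or.inl hik)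
      have hrk : Rch lam i k := by
        rcases eqvGen_rch hlam hclsk with h' | h'
        · exact h'
        · exact absurd h'.le (not_le.2 (lt_of_lamEntry_ne_zero hik))
      have hjk : Rch lam j k :=
        rch_next hlam h hrk (ne_of_lt (lt_of_lamEntry_ne_zero hik))
      exact absurd hkltj (not_lt.2 hjk.le)

end Stmt15Aux

section Stmt15Aux2

variable {F : Type} [Field F] [Fintype F] {n : ℕ}

/-- The set of edges of `lam` whose source is reachable from `i`. -/
def reachPairs (lam : Dual (uAlg n F)) (i : Fin n) : Finset (Fin n × Fin n) :=
  Finset.univ.filter (fun ab => lamEntry lam ab.1 ab.2 ≠ 0 ∧ Rch lam i ab.1)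

/-- The diagonal entries conjugating `lam` into `mu`. -/
def ddiag (lam mu : Dual (uAlg n F)) (i : Fin n) : F :=
  ∏ ab ∈ reachPairs lam i, (lamEntry mu ab.1 ab.2 / lamEntry lam ab.1 ab.2)

lemma reachPairs_step {lam : Dual (uAlg n F)} (hlam : QuasiMonomial lam) {i j : Fin n}
    (hij : lamEntry lam i j ≠ 0) :
    reachPairs lam i = insert (i, j) (reachPairs lam j) ∧ (i, j) ∉ reachPairs lam j := by
  have hiltj : i < j := lt_of_lamEntry_ne_zero hij
  constructor
  · ext ⟨a, b⟩
    simp only [reachPairs, Finset.mem_filter, Finset.mem_univ, true_and,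
      Finset.mem_insert, Prod.mk.injEq]
    constructor
    · rintro ⟨hab, hra⟩
      by_cases hai : a = i
      · subst hai
        have : b = j := hlam.1 a b j hab hij
        exact Or.inl ⟨rfl, this⟩
      · exact Or.inr ⟨hab, rch_next hlam hij hra (fun h => hai h.symm)⟩
    · rintro (⟨rfl, rfl⟩ | ⟨hab, hra⟩)
      · exact ⟨hij, Relation.ReflTransGen.refl⟩
      · exact ⟨hab, Relation.ReflTransGen.head hij hra⟩
  · simp only [reachPairs, Finset.mem_filter, Finset.mem_univ, true_and, not_and]
    intro _ hji
    exact absurd (Rch.le hji) (not_le.2 hiltj)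

lemma ddiag_step {lam mu : Dual (uAlg n F)} (hlam : QuasiMonomial lam) {i j : Fin n}
    (hij : lamEntry lam i j ≠ 0) :
    ddiag lam mu i = (lamEntry mu i j / lamEntry lam i j) * ddiag lam mu j := by
  obtain ⟨heq, hnot⟩ := reachPairs_step hlam hij
  rw [ddiag, heq, Finset.prod_insert hnot]
  rfl

lemma ddiag_ne_zero {lam mu : Dual (uAlg n F)}
    (hsupp : ∀ a b : Fin n, lamEntry lam a b ≠ 0 → lamEntry mu a b ≠ 0) (i : Fin n) :
    ddiag lam mu i ≠ 0 := by
  rw [ddiag, Finset.prod_ne_zero_iff]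
  rintro ⟨a, b⟩ hab
  simp only [reachPairs, Finset.mem_filter, Finset.mem_univ, true_and] at hab
  exact div_ne_zero (hsupp a b hab.1) hab.1

lemma ddiag_key {lam mu : Dual (uAlg n F)}
    (hlam : QuasiMonomial lam) (hmu : QuasiMonomial mu)
    (hshape : shapeClasses lam = shapeClasses mu) (a b : Fin n) :
    lamEntry mu a b = ddiag lam mu a * lamEntry lam a b * (ddiag lam mu b)⁻¹ := by
  have hsupp : ∀ a b : Fin n, lamEntry lam a b ≠ 0 → lamEntry mu a b ≠ 0 :=
    fun a b h => supp_subset hlam hmu hshape h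
  by_cases hab : lamEntry lam a b = 0
  · have hmuab : lamEntry mu a b = 0 := by
      by_contra hc
      exact supp_subset hmu hlam hshape.symm hc hab
    rw [hmuab, hab, mul_zero, zero_mul]
  · have hb : ddiag lam mu b ≠ 0 := ddiag_ne_zero hsupp b
    rw [ddiag_step (mu := mu) hlam hab]
    field_simp

/-- Every functional is determined by its entries. -/
lemma dual_apply (ν : Dual (uAlg n F)) (Y : ↥(uAlg n F)) :
    ν Y = ∑ a : Fin n, ∑ b : Fin n,
      lamEntry ν a b * (Y : Matrix (Fin n) (Fin n) F) a b := by
  classical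
  set eS : Fin n → Fin n → ↥(uAlg n F) := fun a b =>
    if h : Matrix.single a b (1 : F) ∈ uAlg n F then ⟨_, h⟩ else 0 with heS
  have hY : Y = ∑ a : Fin n, ∑ b : Fin n,
      ((Y : Matrix (Fin n) (Fin n) F) a b) • eS a b := by
    apply Subtype.ext
    have hco : ((∑ a : Fin n, ∑ b : Fin n,
        ((Y : Matrix (Fin n) (Fin n) F) a b) • eS a b : ↥(uAlg n F)) :
          Matrix (Fin n) (Fin n) F)
        = ∑ a : Fin n, ∑ b : Fin n,
          ((Y : Matrix (Fin n) (Fin n) F) a b) • ((eS a b : ↥(uAlg n F)) :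
            Matrix (Fin n) (Fin n) F) := by
      rw [AddSubmonoidClass.coe_finset_sum]
      refine Finset.sum_congr rfl fun a _ => ?_
      rw [AddSubmonoidClass.coe_finset_sum]
      exact Finset.sum_congr rfl fun b _ => rfl
    rw [hco]
    ext i j
    rw [Matrix.sum_apply]
    have hterm : ∀ a : Fin n, (∑ b : Fin n,
        ((Y : Matrix (Fin n) (Fin n) F) a b) • ((eS a b : ↥(uAlg n F)) :
          Matrix (Fin n) (Fin n) F)) i j
        = ∑ b : Fin n, ((Y : Matrix (Fin n) (Fin n) F) a b) *
            ((eS a b : ↥(uAlg n F)) : Matrix (Fin n) (Fin n) F) i j := by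
      intro a
      rw [Matrix.sum_apply]
      simp [Matrix.smul_apply]
    rw [Finset.sum_congr rfl (fun a _ => hterm a)]
    have hval : ∀ a b : Fin n, ((eS a b : ↥(uAlg n F)) : Matrix (Fin n) (Fin n) F) i j
        = if a = i ∧ b = j ∧ i < j then 1 else 0 := by
      intro a b
      rw [heS]
      dsimp only
      by_cases hmem : Matrix.single a b (1 : F) ∈ uAlg n F
      · rw [dif_pos hmem]
        show Matrix.single a b (1 : F) i j = _
        by_cases hij : a = i ∧ b = j
        · obtain ⟨rfl, rfl⟩ := hij
          by_cases hlt : a < b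
          · simp [Matrix.single_apply_same, hlt]
          · exfalso
            have := hmem a b (not_lt.1 hlt)
            rw [Matrix.single_apply_same] at this
            exact one_ne_zero this
        · rw [Matrix.single_apply_of_ne _ _ _ _ _ hij]
          have : ¬ (a = i ∧ b = j ∧ i < j) := fun ⟨h1, h2, _⟩ => hij ⟨h1, h2⟩
          rw [if_neg this]
      · rw [dif_neg hmem]
        have hab : ¬ a < b := fun hlt => hmem (std_mem_uAlg hlt)
        have : ¬ (a = i ∧ b = j ∧ i < j) := by
          rintro ⟨rfl, rfl, hlt⟩; exact hab hlt
        simp [if_neg this]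
    have : ∀ a : Fin n, ∑ b : Fin n, ((Y : Matrix (Fin n) (Fin n) F) a b) *
        ((eS a b : ↥(uAlg n F)) : Matrix (Fin n) (Fin n) F) i j
        = if a = i ∧ i < j then (Y : Matrix (Fin n) (Fin n) F) i j else 0 := by
      intro a
      rw [Finset.sum_congr rfl (fun b _ => by rw [hval a b])]
      by_cases hai : a = i
      · subst hai
        by_cases hlt : a < j
        · rw [if_pos ⟨rfl, hlt⟩]
          rw [Finset.sum_eq_single j]
          · rw [if_pos ⟨rfl, rfl, hlt⟩, mul_one]
          · intro b _ hbj
            rw [if_neg (fun h => hbj h.2.1), mul_zero]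
          · intro h
            exact absurd (Finset.mem_univ j) h
        · rw [if_neg (fun h => hlt h.2)]
          refine Finset.sum_eq_zero fun b _ => ?_
          rw [if_neg (fun h => hlt h.2.2), mul_zero]
      · rw [if_neg (fun h => hai h.1)]
        refine Finset.sum_eq_zero fun b _ => ?_
        rw [if_neg (fun h => hai h.1), mul_zero]
    rw [Finset.sum_congr rfl (fun a _ => this a)]
    by_cases hlt : i < j
    · rw [Finset.sum_eq_single i]
      · rw [if_pos ⟨rfl, hlt⟩]
      · intro a _ hax
        rw [if_neg (fun h => hax h.1)]
      · intro h
        exact absurd (Finset.mem_univ i) h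
    · have h0 : (Y : Matrix (Fin n) (Fin n) F) i j = 0 := Y.2 i j (not_lt.1 hlt)
      rw [h0]
      symm
      exact Finset.sum_eq_zero fun a _ => if_neg (fun h => hlt h.2)
  calc ν Y = ν (∑ a : Fin n, ∑ b : Fin n,
      ((Y : Matrix (Fin n) (Fin n) F) a b) • eS a b) := by rw [← hY]
    _ = ∑ a : Fin n, ∑ b : Fin n,
        ((Y : Matrix (Fin n) (Fin n) F) a b) • ν (eS a b) := by
        rw [map_sum]
        refine Finset.sum_congr rfl fun a _ => ?_
        rw [map_sum]
        refine Finset.sum_congr rfl fun b _ => ?_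
        rw [map_smul]
    _ = ∑ a : Fin n, ∑ b : Fin n,
        lamEntry ν a b * (Y : Matrix (Fin n) (Fin n) F) a b := by
        refine Finset.sum_congr rfl fun a _ => Finset.sum_congr rfl fun b _ => ?_
        rw [heS]
        dsimp only
        by_cases hmem : Matrix.single a b (1 : F) ∈ uAlg n F
        · have h1 : lamEntry ν a b = ν ⟨_, hmem⟩ := dif_pos hmem
          rw [dif_pos hmem, h1, smul_eq_mul, mul_comm]
        · have h1 : lamEntry ν a b = 0 := dif_neg hmem
          rw [dif_neg hmem, h1, map_zero, smul_zero, zero_mul]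

end Stmt15Aux2

section Stmt15Transport

variable {F : Type} [Field F] [Fintype F] {n : ℕ}

lemma diag_conj_mem' {X : Matrix (Fin n) (Fin n) F} (hX : X ∈ uAlg n F)
    (d e : Fin n → F) : Matrix.diagonal d * X * Matrix.diagonal e ∈ uAlg n F := by
  intro i j hij
  rw [Matrix.mul_diagonal, Matrix.diagonal_mul, hX i j hij, mul_zero, zero_mul]

/-- The diagonal matrix with nonzero entries `d` as a unit. -/
def diagUnit (d : Fin n → F) (hd : ∀ i, d i ≠ 0) : (Matrix (Fin n) (Fin n) F)ˣ where
  val := Matrix.diagonal d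
  inv := Matrix.diagonal fun i => (d i)⁻¹
  val_inv := by
    rw [Matrix.diagonal_mul_diagonal]
    have h : (fun i : Fin n => d i * (d i)⁻¹) = fun _ => (1 : F) :=
      funext fun i => mul_inv_cancel₀ (hd i)
    rw [h, Matrix.diagonal_one]
  inv_val := by
    rw [Matrix.diagonal_mul_diagonal]
    have h : (fun i : Fin n => (d i)⁻¹ * d i) = fun _ => (1 : F) :=
      funext fun i => inv_mul_cancel₀ (hd i)
    rw [h, Matrix.diagonal_one]

/-- The map `ν ↦ ν(D · D⁻¹)` on the dual of `u_n`. -/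
def adDual (e : Fin n → F) (ν : Dual (uAlg n F)) : Dual (uAlg n F) where
  toFun X := ν ⟨Matrix.diagonal e * (X : Matrix (Fin n) (Fin n) F) *
      Matrix.diagonal (fun i => (e i)⁻¹), diag_conj_mem' X.2 _ _⟩
  map_add' X Y := by
    try dsimp only
    rw [← map_add]
    exact congrArg ν (Subtype.ext (by simp [mul_add, add_mul]))
  map_smul' c X := by
    try dsimp only
    rw [RingHom.id_apply, ← map_smul]
    exact congrArg ν (Subtype.ext (by simp [Matrix.mul_smul, Matrix.smul_mul]))

lemma adDual_apply (e : Fin n → F) (ν : Dual (uAlg n F)) (X : ↥(uAlg n F)) :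
    adDual e ν X = ν ⟨Matrix.diagonal e * (X : Matrix (Fin n) (Fin n) F) *
      Matrix.diagonal (fun i => (e i)⁻¹), diag_conj_mem' X.2 _ _⟩ := rfl

variable (d : Fin n → F) (hd : ∀ i, d i ≠ 0)

include hd

lemma diag_mul_inv :
    Matrix.diagonal d * Matrix.diagonal (fun i => (d i)⁻¹)
      = (1 : Matrix (Fin n) (Fin n) F) :=
  (diagUnit d hd).val_inv

lemma diag_inv_mul :
    Matrix.diagonal (fun i => (d i)⁻¹) * Matrix.diagonal d
      = (1 : Matrix (Fin n) (Fin n) F) :=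
  (diagUnit d hd).inv_val

/-- Conjugation by `diagUnit d` on the unitriangular group. -/
def PhiMap (g : ↥(grp (uAlg n F))) : ↥(grp (uAlg n F)) :=
  ⟨diagUnit d hd * ↑g * (diagUnit d hd)⁻¹, by
    rw [mem_grp_iff]
    have h1 : ((diagUnit d hd * ↑g * (diagUnit d hd)⁻¹ :
        (Matrix (Fin n) (Fin n) F)ˣ) : Matrix (Fin n) (Fin n) F)
        = Matrix.diagonal d * mat g * Matrix.diagonal (fun i => (d i)⁻¹) := rfl
    rw [h1]
    have h2 : Matrix.diagonal d * mat g * Matrix.diagonal (fun i => (d i)⁻¹) - 1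
        = Matrix.diagonal d * (mat g - 1) * Matrix.diagonal (fun i => (d i)⁻¹) := by
      rw [mul_sub, mul_one, sub_mul, diag_mul_inv d hd]
    rw [h2]
    exact diag_conj_mem' (mat_mem g) _ _⟩

/-- Conjugation by `(diagUnit d)⁻¹` on the unitriangular group. -/
def PsiMap (g : ↥(grp (uAlg n F))) : ↥(grp (uAlg n F)) :=
  ⟨(diagUnit d hd)⁻¹ * ↑g * diagUnit d hd, by
    rw [mem_grp_iff]
    have h1 : (((diagUnit d hd)⁻¹ * ↑g * diagUnit d hd :
        (Matrix (Fin n) (Fin n) F)ˣ) : Matrix (Fin n) (Fin n) F)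
        = Matrix.diagonal (fun i => (d i)⁻¹) * mat g * Matrix.diagonal d := rfl
    rw [h1]
    have h2 : Matrix.diagonal (fun i => (d i)⁻¹) * mat g * Matrix.diagonal d - 1
        = Matrix.diagonal (fun i => (d i)⁻¹) * (mat g - 1) * Matrix.diagonal d := by
      rw [mul_sub, mul_one, sub_mul, diag_inv_mul d hd]
    rw [h2]
    exact diag_conj_mem' (mat_mem g) _ _⟩

lemma PhiMap_PsiMap (g : ↥(grp (uAlg n F))) : PhiMap d hd (PsiMap d hd g) = g := by
  apply Subtype.ext
  show diagUnit d hd * ((diagUnit d hd)⁻¹ * ↑g * diagUnit d hd) * (diagUnit d hd)⁻¹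
      = (↑g : (Matrix (Fin n) (Fin n) F)ˣ)
  group

lemma PhiMap_one : PhiMap d hd 1 = 1 := by
  apply Subtype.ext
  show diagUnit d hd * ↑(1 : ↥(grp (uAlg n F))) * (diagUnit d hd)⁻¹ = 1
  rw [OneMemClass.coe_one, mul_one, mul_inv_cancel]

lemma PhiMap_inv (g : ↥(grp (uAlg n F))) :
    PhiMap d hd g⁻¹ = (PhiMap d hd g)⁻¹ := by
  apply Subtype.ext
  show diagUnit d hd * ↑(g⁻¹) * (diagUnit d hd)⁻¹ = ↑((PhiMap d hd g)⁻¹)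
  rw [InvMemClass.coe_inv, InvMemClass.coe_inv]
  show diagUnit d hd * (↑g)⁻¹ * (diagUnit d hd)⁻¹
      = (diagUnit d hd * ↑g * (diagUnit d hd)⁻¹)⁻¹
  group


lemma adDual_leftInverse (ν : Dual (uAlg n F)) :
    adDual (fun i => (d i)⁻¹) (adDual d ν) = ν := by
  apply LinearMap.ext
  intro X
  rw [adDual_apply, adDual_apply]
  refine congrArg ν (Subtype.ext ?_)
  show Matrix.diagonal d *
      (Matrix.diagonal (fun i => (d i)⁻¹) * (X : Matrix (Fin n) (Fin n) F) *
        Matrix.diagonal (fun i => ((d i)⁻¹)⁻¹)) *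
      Matrix.diagonal (fun i => (d i)⁻¹) = (X : Matrix (Fin n) (Fin n) F)
  simp only [inv_inv]
  have hre : Matrix.diagonal d *
      (Matrix.diagonal (fun i => (d i)⁻¹) * (X : Matrix (Fin n) (Fin n) F) *
        Matrix.diagonal (fun i => d i)) * Matrix.diagonal (fun i => (d i)⁻¹)
      = (Matrix.diagonal d * Matrix.diagonal (fun i => (d i)⁻¹)) *
        (X : Matrix (Fin n) (Fin n) F) *
        (Matrix.diagonal (fun i => d i) * Matrix.diagonal (fun i => (d i)⁻¹)) := by
    noncomm_ring
  rw [hre]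
  have hd2 : Matrix.diagonal (fun i => d i) = Matrix.diagonal d := rfl
  rw [hd2, diag_mul_inv d hd, one_mul, mul_one]

lemma adDual_injective : Function.Injective (adDual (n := n) d) := by
  intro a b h
  have h2 := congrArg (adDual (fun i => (d i)⁻¹)) h
  rwa [adDual_leftInverse d hd, adDual_leftInverse d hd] at h2

lemma thetaFun_adDual (θ : AddChar F ℂ) (ν : Dual (uAlg n F)) (g : ↥(grp (uAlg n F))) :
    thetaFun θ (adDual d ν) g = thetaFun θ ν (PhiMap d hd g) := by
  unfold thetaFun
  have harg : (adDual d ν) (gsub g) = ν (gsub (PhiMap d hd g)) := by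
    rw [adDual_apply]
    refine congrArg ν (Subtype.ext ?_)
    show Matrix.diagonal d * (mat g - 1) * Matrix.diagonal (fun i => (d i)⁻¹)
        = mat (PhiMap d hd g) - 1
    have hm : mat (PhiMap d hd g)
        = Matrix.diagonal d * mat g * Matrix.diagonal (fun i => (d i)⁻¹) := rfl
    rw [hm, mul_sub, mul_one, sub_mul, diag_mul_inv d hd]
  rw [harg]

lemma conjDual_adDual (a b : ↥(grp (uAlg n F))) (ν : Dual (uAlg n F)) :
    conjDual a b (adDual d ν)
      = adDual d (conjDual (PhiMap d hd a) (PhiMap d hd b) ν) := by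
  apply LinearMap.ext
  intro X
  have hL : conjDual a b (adDual d ν) X
      = ν ⟨Matrix.diagonal d * (mat a * (X : Matrix (Fin n) (Fin n) F) * mat b) *
          Matrix.diagonal (fun i => (d i)⁻¹), diag_conj_mem' (conj_mem a b X.2) _ _⟩ := rfl
  have hR : adDual d (conjDual (PhiMap d hd a) (PhiMap d hd b) ν) X
      = ν ⟨mat (PhiMap d hd a) *
          (Matrix.diagonal d * (X : Matrix (Fin n) (Fin n) F) *
            Matrix.diagonal (fun i => (d i)⁻¹)) * mat (PhiMap d hd b),
          conj_mem _ _ (diag_conj_mem' X.2 _ _)⟩ := rfl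
  rw [hL, hR]
  refine congrArg ν (Subtype.ext ?_)
  show Matrix.diagonal d * (mat a * (X : Matrix (Fin n) (Fin n) F) * mat b) *
      Matrix.diagonal (fun i => (d i)⁻¹)
      = (Matrix.diagonal d * mat a * Matrix.diagonal (fun i => (d i)⁻¹)) *
        (Matrix.diagonal d * (X : Matrix (Fin n) (Fin n) F) *
          Matrix.diagonal (fun i => (d i)⁻¹)) *
        (Matrix.diagonal d * mat b * Matrix.diagonal (fun i => (d i)⁻¹))
  have hcanc : ∀ Z : Matrix (Fin n) (Fin n) F,
      Matrix.diagonal (fun i => (d i)⁻¹) * (Matrix.diagonal d * Z) = Z := by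
    intro Z
    rw [← mul_assoc, diag_inv_mul d hd, one_mul]
  simp only [mul_assoc]
  rw [hcanc, hcanc]

lemma leftOrbit_adDual (ν : Dual (uAlg n F)) :
    leftOrbit (adDual d ν) = adDual d '' leftOrbit ν := by
  ext x
  constructor
  · rintro ⟨g, rfl⟩
    refine ⟨conjDual (PhiMap d hd g⁻¹) 1 ν, ⟨PhiMap d hd g, ?_⟩, ?_⟩
    · rw [PhiMap_inv]
    · rw [conjDual_adDual d hd g⁻¹ 1 ν, PhiMap_one]
  · rintro ⟨y, ⟨g, rfl⟩, rfl⟩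
    refine ⟨PsiMap d hd g, ?_⟩
    rw [conjDual_adDual d hd (PsiMap d hd g)⁻¹ 1 ν, PhiMap_one, PhiMap_inv,
      PhiMap_PsiMap]

lemma biOrbit_adDual (ν : Dual (uAlg n F)) :
    biOrbit (adDual d ν) = adDual d '' biOrbit ν := by
  ext x
  constructor
  · rintro ⟨g, h, rfl⟩
    refine ⟨conjDual (PhiMap d hd g⁻¹) (PhiMap d hd h⁻¹) ν,
      ⟨PhiMap d hd g, PhiMap d hd h, ?_⟩, ?_⟩
    · rw [PhiMap_inv, PhiMap_inv]
    · rw [conjDual_adDual d hd g⁻¹ h⁻¹ ν]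
  · rintro ⟨y, ⟨g, h, rfl⟩, rfl⟩
    refine ⟨PsiMap d hd g, PsiMap d hd h, ?_⟩
    rw [conjDual_adDual d hd (PsiMap d hd g)⁻¹ (PsiMap d hd h)⁻¹ ν, PhiMap_inv,
      PhiMap_inv, PhiMap_PsiMap, PhiMap_PsiMap]

lemma superChar_adDual (θ : AddChar F ℂ) (ν : Dual (uAlg n F)) (g : ↥(grp (uAlg n F))) :
    superChar θ (adDual d ν) g = superChar θ ν (PhiMap d hd g) := by
  unfold superChar
  rw [biOrbit_adDual d hd, leftOrbit_adDual d hd,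
    Nat.card_image_of_injective (adDual_injective d hd),
    Nat.card_image_of_injective (adDual_injective d hd),
    finsum_mem_image ((adDual_injective d hd).injOn)]
  congr 1
  exact finsum_mem_congr rfl (fun x _ => thetaFun_adDual d hd θ x g)

end Stmt15Transport

/-- If `λ, μ ∈ u_n(q)*` are quasi-monomial with the same shape, then
there is an invertible diagonal matrix `D` with `χ_μ(g) = χ_λ(D g D⁻¹)` for all
`g ∈ UT_n(q)`. -/
theorem statement15 (p : ℕ) (hp : p.Prime) (F : Type) [Field F] [Fintype F] [CharP F p]
    (θ : AddChar F ℂ) (hθ : θ ≠ 1) (n : ℕ)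
    (lam mu : Dual (uAlg n F)) (hlam : QuasiMonomial lam) (hmu : QuasiMonomial mu)
    (hshape : shapeClasses lam = shapeClasses mu) :
    ∃ D : (Matrix (Fin n) (Fin n) F)ˣ,
      (∀ i j : Fin n, i ≠ j → (D : Matrix (Fin n) (Fin n) F) i j = 0) ∧
      ∀ g : ↥(grp (uAlg n F)), ∃ h : ↥(grp (uAlg n F)),
        (h : (Matrix (Fin n) (Fin n) F)ˣ) = D * (g : (Matrix (Fin n) (Fin n) F)ˣ) * D⁻¹ ∧
        superChar θ mu g = superChar θ lam h := by
  classical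
  have hsupp : ∀ a b : Fin n, lamEntry lam a b ≠ 0 → lamEntry mu a b ≠ 0 :=
    fun a b h => supp_subset hlam hmu hshape h
  set d : Fin n → F := ddiag lam mu with hdd
  have hd : ∀ i, d i ≠ 0 := fun i => ddiag_ne_zero hsupp i
  have hmu_eq : mu = adDual d lam := by
    apply LinearMap.ext
    intro X
    rw [dual_apply mu X, adDual_apply, dual_apply lam]
    refine Finset.sum_congr rfl fun a _ => Finset.sum_congr rfl fun b _ => ?_
    have hentry : ((⟨Matrix.diagonal d * (X : Matrix (Fin n) (Fin n) F) *
        Matrix.diagonal (fun i => (d i)⁻¹), diag_conj_mem' X.2 _ _⟩ : ↥(uAlg n F)) :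
          Matrix (Fin n) (Fin n) F) a b
        = d a * (X : Matrix (Fin n) (Fin n) F) a b * (d b)⁻¹ := by
      show (Matrix.diagonal d * (X : Matrix (Fin n) (Fin n) F) *
        Matrix.diagonal fun i => (d i)⁻¹) a b = _
      rw [Matrix.mul_diagonal, Matrix.diagonal_mul]
    rw [hentry, ddiag_key hlam hmu hshape a b]
    ring
  refine ⟨diagUnit d hd, fun i j hij => Matrix.diagonal_apply_ne d hij,
    fun g => ⟨PhiMap d hd g, rfl, ?_⟩⟩
  rw [hmu_eq]
  exact superChar_adDual d hd θ lam g

end Paper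
end
end
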